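/- arXiv:0807.3364 — 10 statements merged into one kernel-verified Lean document; each statement's English description precedes it below -/
import Mathlib

section
/- If α and β are π-adjacent permutations for an ordered partition π = (X_1,...,X_m), then the distance d(α,β) equals the sum over i of |X_i| choose 2. -/
/-- The inversion distance between two permutations of `Fin n`: the number of
pairs `{x,y}` (with `x < y`) appearing in opposite relative orders in the linear
orders induced by `α` and `β`, where `x <_α y ↔ α⁻¹ x < α⁻¹ y`. -/
def invDist {n : ℕ} (α β : Equiv.Perm (Fin n)) : ℕ :=
  (Finset.univ.filter fun p : Fin n × Fin n =>
    p.1 < p.2 ∧ ¬ ((α⁻¹ p.1 < α⁻¹ p.2) ↔ (β⁻¹ p.1 < β⁻¹ p.2))).card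
/-- `b` assigns to each `i : Fin n` the endpoints of the block of an ordered
partition of `(Fin n, <)` into consecutive intervals, and `τ` is the permutation
reversing the order of the elements inside every block. -/
def IsBlockData {n : ℕ} (b : Fin n → Fin n × Fin n) (τ : Equiv.Perm (Fin n)) : Prop :=
  ∀ i : Fin n, (b i).1 ≤ i ∧ i ≤ (b i).2 ∧
    (∀ j : Fin n, (b i).1 ≤ j → j ≤ (b i).2 → b j = b i) ∧
    ((τ i : ℕ) = (b i).1 + (b i).2 - (i : ℕ))

/-- `α` and `β` are adjacent in the big permutograph: `α = β * τ_π` for the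
block-reversal permutation `τ_π` of some nontrivial ordered partition `π`. -/
def PermAdjacent {n : ℕ} (α β : Equiv.Perm (Fin n)) : Prop :=
  ∃ τ : Equiv.Perm (Fin n), (∃ b, IsBlockData b τ) ∧ τ ≠ 1 ∧ α = β * τ

lemma two_mul_choose_two : ∀ m : ℕ, 2 * m.choose 2 = m * (m - 1) := by
  intro m
  rw [Nat.choose_two_right, Nat.mul_div_cancel']
  rcases m with _ | k
  · simp
  · simpa [Nat.succ_sub_one, mul_comm] using (Nat.even_mul_succ_self k).two_dvd

lemma card_lt_pairs {n : ℕ} (s : Finset (Fin n)) :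
    (((s ×ˢ s)).filter fun q : Fin n × Fin n => q.1 < q.2).card = s.card.choose 2 := by
  have hswap : (((s ×ˢ s)).filter fun q : Fin n × Fin n => q.1 < q.2).card
      = (((s ×ˢ s)).filter fun q : Fin n × Fin n => q.2 < q.1).card := by
    apply Finset.card_bij (fun p _ => Prod.swap p)
    · intro a ha
      simp only [Finset.mem_filter, Finset.mem_product] at ha ⊢
      exact ⟨⟨ha.1.2, ha.1.1⟩, ha.2⟩
    · intro a _ b _ h
      exact Prod.swap_injective h
    · intro c hc
      simp only [Finset.mem_filter, Finset.mem_product] at hc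
      exact ⟨Prod.swap c, by simp [Finset.mem_filter, Finset.mem_product, hc.1.1, hc.1.2, hc.2],
        by simp⟩
  have hunion : (((s ×ˢ s)).filter fun q : Fin n × Fin n => q.1 < q.2).card
      + (((s ×ˢ s)).filter fun q : Fin n × Fin n => q.2 < q.1).card = s.offDiag.card := by
    rw [← Finset.card_union_of_disjoint]
    · congr 1
      rw [← Finset.filter_or]
      ext p
      simp only [Finset.mem_filter, Finset.mem_product, Finset.mem_offDiag]
      constructor
      · rintro ⟨⟨h1, h2⟩, h3⟩
        refine ⟨h1, h2, ?_⟩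
        rcases h3 with h | h
        · exact ne_of_lt h
        · exact (ne_of_lt h).symm
      · rintro ⟨h1, h2, h3⟩
        exact ⟨⟨h1, h2⟩, lt_or_gt_of_ne h3⟩
    · rw [Finset.disjoint_filter]
      intro p _ h1 h2
      exact absurd h2 (not_lt.mpr h1.le)
  rw [Finset.offDiag_card] at hunion
  have h2 := two_mul_choose_two s.card
  rw [Nat.mul_sub, Nat.mul_one] at h2
  omega

/-- If `α` and `β` are `π`-adjacent, the inversion distance `d(α,β)` equals the
sum over the blocks `X_i` of `π` of `|X_i| choose 2`. -/
theorem invDist_pi_adjacent {n : ℕ} (α β τ : Equiv.Perm (Fin n))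
    (b : Fin n → Fin n × Fin n) (hb : IsBlockData b τ) (hadj : α = β * τ) :
    invDist α β =
      ∑ p ∈ Finset.image b Finset.univ, (((p.2 : ℕ) - (p.1 : ℕ) + 1).choose 2) := by
  classical
  -- separation of distinct blocks
  have hsep : ∀ u v : Fin n, u < v → b u ≠ b v → ((b u).2 : ℕ) < ((b v).1 : ℕ) := by
    intro u v huv hne
    obtain ⟨hu1, hu2, hu3, -⟩ := hb u
    obtain ⟨hv1, hv2, hv3, -⟩ := hb v
    by_contra hcon
    push_neg at hcon
    by_cases hv : v ≤ (b u).2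
    · exact hne ((hu3 v (le_of_lt (lt_of_le_of_lt hu1 huv)) hv).symm)
    · push_neg at hv
      have h1 : b ((b u).2) = b v := hv3 _ (by exact_mod_cast hcon)
        (le_of_lt (lt_of_lt_of_le hv hv2))
      have h2 : b ((b u).2) = b u := hu3 _ (le_trans hu1 hu2) le_rfl
      exact hne (h2 ▸ h1)
  -- key: for u < v, non-inversion by τ iff same block
  have key : ∀ u v : Fin n, u < v → (¬ τ u < τ v ↔ b u = b v) := by
    intro u v huv
    obtain ⟨hu1, hu2, -, hu4⟩ := hb u
    obtain ⟨hv1, hv2, -, hv4⟩ := hb v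
    have hu1' : ((b u).1 : ℕ) ≤ u := hu1
    have hu2' : (u : ℕ) ≤ (b u).2 := hu2
    have hv1' : ((b v).1 : ℕ) ≤ v := hv1
    have hv2' : (v : ℕ) ≤ (b v).2 := hv2
    constructor
    · intro h
      by_contra hne
      have hs := hsep u v huv hne
      exact h (by rw [Fin.lt_def, hu4, hv4]; omega)
    · intro h
      rw [Fin.lt_def, hu4, hv4, h]
      have huv' : (u : ℕ) < v := huv
      omega
  -- the symmetric condition
  have cond : ∀ u v : Fin n, u ≠ v → (¬ (τ u < τ v ↔ u < v) ↔ b u = b v) := by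
    intro u v hne
    have hτne : τ u ≠ τ v := fun h => hne (τ.injective h)
    rcases lt_or_gt_of_ne hne with h | h
    · have hred : (¬ (τ u < τ v ↔ u < v)) ↔ ¬ τ u < τ v := by
        constructor
        · intro hc hlt
          exact hc ⟨fun _ => h, fun _ => hlt⟩
        · intro hn hi
          exact hn (hi.mpr h)
      rw [hred]
      exact key u v h
    · have h' : ¬ u < v := not_lt.mpr h.le
      have hred : (¬ (τ u < τ v ↔ u < v)) ↔ τ u < τ v := by
        constructor
        · intro hc
          by_contra hnl
          exact hc (iff_of_false hnl h')
        · intro hlt hi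
          exact h' (hi.mp hlt)
      rw [hred]
      constructor
      · intro hlt
        exact ((key v u h).mp (fun hvu => absurd hlt (not_lt.mpr hvu.le))).symm
      · intro hbe
        rcases hτne.lt_or_gt with hl | hl
        · exact hl
        · exact absurd hl ((key v u h).mpr hbe.symm)
  -- τ is an involution
  have htt : ∀ i : Fin n, τ (τ i) = i := by
    intro i
    obtain ⟨h1, h2, h3, h4⟩ := hb i
    have h1' : ((b i).1 : ℕ) ≤ i := h1
    have h2' : (i : ℕ) ≤ (b i).2 := h2
    have hbti : b (τ i) = b i := by
      apply h3
      · rw [Fin.le_def, h4]; omega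
      · rw [Fin.le_def, h4]; omega
    obtain ⟨-, -, -, h4'⟩ := hb (τ i)
    apply Fin.ext
    rw [h4', hbti, h4]
    omega
  have hinv : ∀ x : Fin n, τ⁻¹ x = τ x := by
    intro x
    rw [← htt x, Equiv.Perm.coe_inv, Equiv.symm_apply_apply, htt]
  have hainv : ∀ x : Fin n, α⁻¹ x = τ (β⁻¹ x) := by
    intro x
    rw [hadj, mul_inv_rev]
    simp only [Equiv.Perm.mul_apply]
    rw [hinv]
  -- rewrite the filter condition
  have hfilter : (Finset.univ.filter fun p : Fin n × Fin n =>
      p.1 < p.2 ∧ ¬ ((α⁻¹ p.1 < α⁻¹ p.2) ↔ (β⁻¹ p.1 < β⁻¹ p.2)))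
      = Finset.univ.filter fun p : Fin n × Fin n =>
      p.1 < p.2 ∧ b (β⁻¹ p.1) = b (β⁻¹ p.2) := by
    apply Finset.filter_congr
    intro p _
    simp only [hainv]
    exact and_congr_right fun hp =>
      cond _ _ (fun h => absurd (β⁻¹.injective h) (ne_of_lt hp))
  -- bijection to pairs in the same block
  have hbij : (Finset.univ.filter fun p : Fin n × Fin n =>
      p.1 < p.2 ∧ b (β⁻¹ p.1) = b (β⁻¹ p.2)).card
      = (Finset.univ.filter fun q : Fin n × Fin n => q.1 < q.2 ∧ b q.1 = b q.2).card := by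
    apply Finset.card_bij'
      (i := fun p _ => if β⁻¹ p.1 < β⁻¹ p.2 then (β⁻¹ p.1, β⁻¹ p.2) else (β⁻¹ p.2, β⁻¹ p.1))
      (j := fun q _ => if β q.1 < β q.2 then (β q.1, β q.2) else (β q.2, β q.1))
    · intro p hp
      simp only [Finset.mem_filter, Finset.mem_univ, true_and] at hp ⊢
      obtain ⟨hlt, hbe⟩ := hp
      have hne : β⁻¹ p.1 ≠ β⁻¹ p.2 := fun h => absurd (β⁻¹.injective h) (ne_of_lt hlt)
      split_ifs with h
      · exact ⟨h, hbe⟩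
      · exact ⟨(hne.lt_or_gt).resolve_left h, hbe.symm⟩
    · intro q hq
      simp only [Finset.mem_filter, Finset.mem_univ, true_and] at hq ⊢
      obtain ⟨hlt, hbe⟩ := hq
      split_ifs with h
      · simpa using ⟨h, hbe⟩
      · have hne : β q.1 ≠ β q.2 := fun hh => absurd (β.injective hh) (ne_of_lt hlt)
        refine ⟨(hne.lt_or_gt).resolve_left h, ?_⟩
        simpa using hbe.symm
    · intro p hp
      simp only [Finset.mem_filter, Finset.mem_univ, true_and] at hp
      obtain ⟨hlt, -⟩ := hp
      split_ifs with h h2 h3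
      · simp
      · simp only [Equiv.Perm.coe_inv, Equiv.apply_symm_apply] at h2
        exact absurd hlt (not_lt.mpr (le_of_not_gt h2))
      · simp only [Equiv.Perm.coe_inv, Equiv.apply_symm_apply] at h3
        exact absurd (h3.trans hlt) (lt_irrefl _)
      · simp
    · intro q hq
      simp only [Finset.mem_filter, Finset.mem_univ, true_and] at hq
      obtain ⟨hlt, -⟩ := hq
      split_ifs with h h2 h3
      · simp
      · simp only [Equiv.Perm.coe_inv, Equiv.symm_apply_apply] at h2
        exact absurd hlt (not_lt.mpr (le_of_not_gt h2))
      · simp only [Equiv.Perm.coe_inv, Equiv.symm_apply_apply] at h3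
        exact absurd (h3.trans hlt) (lt_irrefl _)
      · simp
  -- decompose as a disjoint union over blocks
  have hmemIcc : ∀ p ∈ Finset.image b Finset.univ, ∀ j : Fin n,
      b j = p ↔ (p.1 ≤ j ∧ j ≤ p.2) := by
    intro p hp j
    obtain ⟨i0, -, hi0⟩ := Finset.mem_image.mp hp
    constructor
    · intro h
      obtain ⟨h1, h2, -, -⟩ := hb j
      rw [h] at h1 h2
      exact ⟨h1, h2⟩
    · rintro ⟨h1, h2⟩
      obtain ⟨-, -, h3, -⟩ := hb i0
      rw [← hi0]
      exact h3 j (hi0 ▸ h1) (hi0 ▸ h2)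
  have hdecomp : (Finset.univ.filter fun q : Fin n × Fin n => q.1 < q.2 ∧ b q.1 = b q.2)
      = (Finset.image b Finset.univ).biUnion (fun p =>
        ((Finset.Icc p.1 p.2) ×ˢ (Finset.Icc p.1 p.2)).filter
          fun q : Fin n × Fin n => q.1 < q.2) := by
    ext q
    simp only [Finset.mem_filter, Finset.mem_univ, true_and, Finset.mem_biUnion,
      Finset.mem_product, Finset.mem_Icc]
    constructor
    · rintro ⟨hlt, hbe⟩
      refine ⟨b q.1, Finset.mem_image_of_mem b (Finset.mem_univ q.1), ?_, hlt⟩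
      have hm := Finset.mem_image_of_mem b (Finset.mem_univ q.1)
      exact ⟨(hmemIcc _ hm q.1).mp rfl, (hmemIcc _ hm q.2).mp hbe.symm⟩
    · rintro ⟨p, hp, ⟨hq1, hq2⟩, hlt⟩
      exact ⟨hlt, ((hmemIcc p hp q.1).mpr hq1).trans ((hmemIcc p hp q.2).mpr hq2).symm⟩
  -- put things together
  rw [invDist, hfilter, hbij, hdecomp, Finset.card_biUnion]
  · apply Finset.sum_congr rfl
    intro p hp
    rw [card_lt_pairs, Fin.card_Icc]
    obtain ⟨i0, -, hi0⟩ := Finset.mem_image.mp hp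
    obtain ⟨h1, h2, -, -⟩ := hb i0
    have h1' : ((b i0).1 : ℕ) ≤ i0 := h1
    have h2' : (i0 : ℕ) ≤ (b i0).2 := h2
    have hple : (p.1 : ℕ) ≤ p.2 := by rw [← hi0]; omega
    congr 1
    omega
  · intro x hx y hy hxy
    rw [Function.onFun, Finset.disjoint_left]
    intro q hqx hqy
    simp only [Finset.mem_filter, Finset.mem_product, Finset.mem_Icc] at hqx hqy
    exact hxy (((hmemIcc x hx q.1).mpr hqx.1.1).symm.trans ((hmemIcc y hy q.1).mpr hqy.1.1))
end

section
/- A function F : S → X on a nonempty subset S of S_n satisfies the separation property if and only if F is a lattice polynomial, i.e., there is a family {K_i}_{i∈I} of subsets of X such that F(α) = ⋁_{i∈I} ⋀_{j∈K_i} j (meet and join with respect to ≤_α) for all α ∈ S. -/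
/-- `F` satisfies the separation property on `S`: for any `α, β ∈ S` there is
`u` with `u ≤_α F(α)` and `u ≥_β F(β)`, where `x ≤_α y ↔ α⁻¹ x ≤ α⁻¹ y`. -/
def SepProp {n : ℕ} (S : Set (Equiv.Perm (Fin n))) (F : Equiv.Perm (Fin n) → Fin n) : Prop :=
  ∀ α ∈ S, ∀ β ∈ S, ∃ u : Fin n, α⁻¹ u ≤ α⁻¹ (F α) ∧ β⁻¹ (F β) ≤ β⁻¹ u

/-- `F` is a lattice polynomial on `S`: `F(α) = ⋁_{K ∈ 𝒦} ⋀_{j ∈ K} j`, where the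
join and meet are taken in the linear order `≤_α` induced by `α`. -/
def IsLatticePoly {n : ℕ} (S : Set (Equiv.Perm (Fin n)))
    (F : Equiv.Perm (Fin n) → Fin n) : Prop :=
  ∃ (𝒦 : Finset (Finset (Fin n))) (h𝒦 : 𝒦.Nonempty) (hK : ∀ K ∈ 𝒦, K.Nonempty),
    ∀ α ∈ S, F α = α (𝒦.attach.sup' (Finset.attach_nonempty_iff.mpr h𝒦)
      fun K => K.1.inf' (hK K.1 K.2) fun j => α⁻¹ j)

/-- A function on a nonempty set of permutations satisfies the separation
property iff it is a lattice polynomial. -/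
theorem sepProp_iff_isLatticePoly {n : ℕ} (S : Set (Equiv.Perm (Fin n)))
    (hS : S.Nonempty) (F : Equiv.Perm (Fin n) → Fin n) :
    SepProp S F ↔ IsLatticePoly S F := by
  classical
  constructor
  · intro hsep
    refine ⟨(S.toFinite.toFinset).image
        (fun β => Finset.univ.filter (fun j => β⁻¹ (F β) ≤ β⁻¹ j)), ?_, ?_, ?_⟩
    · obtain ⟨β, hβ⟩ := hS
      exact ⟨_, Finset.mem_image_of_mem _ (S.toFinite.mem_toFinset.mpr hβ)⟩
    · intro K hKmem
      obtain ⟨β, hβ, rfl⟩ := Finset.mem_image.mp hKmem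
      exact ⟨F β, by simp⟩
    · intro α hα
      refine Eq.symm ?_
      rw [← Equiv.Perm.eq_inv_iff_eq]
      refine le_antisymm ?_ ?_
      · refine Finset.sup'_le _ _ ?_
        rintro ⟨K, hKmem⟩ -
        obtain ⟨β, hβ, rfl⟩ := Finset.mem_image.mp hKmem
        obtain ⟨u, hu1, hu2⟩ := hsep α hα β (S.toFinite.mem_toFinset.mp hβ)
        refine le_trans (Finset.inf'_le _ ?_) hu1
        simpa using hu2
      · have hαK : (Finset.univ.filter (fun j => α⁻¹ (F α) ≤ α⁻¹ j)) ∈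
            (S.toFinite.toFinset).image
              (fun β => Finset.univ.filter (fun j => β⁻¹ (F β) ≤ β⁻¹ j)) :=
          Finset.mem_image_of_mem _ (S.toFinite.mem_toFinset.mpr hα)
        refine le_trans ?_ (Finset.le_sup' _ (Finset.mem_attach _ ⟨_, hαK⟩))
        refine Finset.le_inf' _ _ ?_
        intro j hj
        simpa using hj
  · rintro ⟨𝒦, h𝒦, hK, hF⟩
    intro α hα β hβ
    obtain ⟨K₀, hK₀mem, hK₀⟩ := Finset.exists_mem_eq_sup'
      (Finset.attach_nonempty_iff.mpr h𝒦)
      (fun K : {x // x ∈ 𝒦} => K.1.inf' (hK K.1 K.2) fun j => β⁻¹ j)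
    obtain ⟨u, humem, hu⟩ := Finset.exists_mem_eq_inf' (hK K₀.1 K₀.2) (fun j => α⁻¹ j)
    refine ⟨u, ?_, ?_⟩
    · rw [hF α hα, Equiv.Perm.inv_eq_iff_eq.mpr rfl, ← hu]
      exact Finset.le_sup' (fun K : {x // x ∈ 𝒦} => K.1.inf' (hK K.1 K.2) fun j => α⁻¹ j) (Finset.mem_attach _ K₀)
    · rw [hF β hβ, Equiv.Perm.inv_eq_iff_eq.mpr rfl, hK₀]
      exact Finset.inf'_le _ humem
end

section
/- Let S be the vertex set of a permutograph on S_n (an isometric subgraph of the big permutograph with the inversion-distance weights). A function F : S → X is a discrete piecewise linear function if and only if it satisfies the separation property. -/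
/-- `S` is the vertex set of a permutograph: any two of its vertices are joined by
a path inside `S`, consisting of adjacent permutations, whose total weight (sum of
inversion distances of consecutive vertices) equals the inversion distance of the
endpoints (i.e. `S` is a connected isometric subgraph of the big permutograph). -/
def IsPermutograph {n : ℕ} (S : Set (Equiv.Perm (Fin n))) : Prop :=
  ∀ α ∈ S, ∀ β ∈ S, ∃ (m : ℕ) (c : ℕ → Equiv.Perm (Fin n)),
    c 0 = α ∧ c m = β ∧ (∀ i ≤ m, c i ∈ S) ∧
    (∀ i < m, PermAdjacent (c i) (c (i + 1))) ∧
    ∑ i ∈ Finset.range m, invDist (c i) (c (i + 1)) = invDist α β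

/-- `F` is a discrete piecewise linear function on `S`: for any two `π`-adjacent
`α, β ∈ S`, the values `F(α)` and `F(β)` occupy positions in the same block of `π`,
i.e. `F(α) ∈ α(X_i)` and `F(β) ∈ β(X_i)` for the same block `X_i`. -/
def IsDPL {n : ℕ} (S : Set (Equiv.Perm (Fin n))) (F : Equiv.Perm (Fin n) → Fin n) : Prop :=
  ∀ α ∈ S, ∀ β ∈ S, ∀ (τ : Equiv.Perm (Fin n)) (b : Fin n → Fin n × Fin n),
    IsBlockData b τ → τ ≠ 1 → α = β * τ →
      b (α⁻¹ (F α)) = b (β⁻¹ (F β))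

section Aux

variable {n : ℕ}

lemma bd_lo_le_hi {b : Fin n → Fin n × Fin n} {τ : Equiv.Perm (Fin n)}
    (hb : IsBlockData b τ) (i : Fin n) : (b i).1 ≤ (b i).2 :=
  le_trans (hb i).1 (hb i).2.1

lemma bd_mem {b : Fin n → Fin n × Fin n} {τ : Equiv.Perm (Fin n)}
    (hb : IsBlockData b τ) {i j : Fin n}
    (h1 : (b i).1 ≤ j) (h2 : j ≤ (b i).2) : b j = b i :=
  (hb i).2.2.1 j h1 h2

lemma bd_tau_mem {b : Fin n → Fin n × Fin n} {τ : Equiv.Perm (Fin n)}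
    (hb : IsBlockData b τ) (i : Fin n) : b (τ i) = b i := by
  have h1 := Fin.le_def.mp (hb i).1
  have h2 := Fin.le_def.mp (hb i).2.1
  have hv := (hb i).2.2.2
  exact bd_mem hb (Fin.le_def.mpr (by omega)) (Fin.le_def.mpr (by omega))

lemma bd_tau_lo {b : Fin n → Fin n × Fin n} {τ : Equiv.Perm (Fin n)}
    (hb : IsBlockData b τ) (i : Fin n) : τ (b i).1 = (b i).2 := by
  have hbl : b (b i).1 = b i := bd_mem hb le_rfl (bd_lo_le_hi hb i)
  have h := (hb (b i).1).2.2.2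
  rw [hbl] at h
  apply Fin.ext
  rw [h]
  omega

lemma bd_tri {b : Fin n → Fin n × Fin n} {τ : Equiv.Perm (Fin n)}
    (hb : IsBlockData b τ) {x y : Fin n} (hxy : x ≤ y) :
    b x = b y ∨ (b x).2 < (b y).1 := by
  by_cases h : b x = b y
  · exact Or.inl h
  right
  have hy2 : (b x).2 < y := by
    by_contra hc
    push_neg at hc
    exact h (bd_mem hb (le_trans (hb x).1 hxy) hc).symm
  by_contra hc
  push_neg at hc
  exact h ((bd_mem hb (bd_lo_le_hi hb x) le_rfl).symm.trans
    (bd_mem hb hc (le_of_lt (lt_of_lt_of_le hy2 (hb y).2.1))))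

lemma bd_chain {b : Fin n → Fin n × Fin n} {τ : Equiv.Perm (Fin n)}
    (hb : IsBlockData b τ) {x y z : Fin n}
    (h1 : b x = b y ∨ (b x).2 < (b y).1) (h2 : b y = b z ∨ (b y).2 < (b z).1) :
    b x = b z ∨ (b x).2 < (b z).1 := by
  rcases h1 with h1 | h1 <;> rcases h2 with h2 | h2
  · exact Or.inl (h1.trans h2)
  · exact Or.inr (by rw [h1]; exact h2)
  · exact Or.inr (by rw [← h2]; exact h1)
  · exact Or.inr ((h1.trans_le (bd_lo_le_hi hb y)).trans h2)

lemma invDist_self (γ : Equiv.Perm (Fin n)) : invDist γ γ = 0 := by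
  unfold invDist
  rw [Finset.card_eq_zero, Finset.filter_eq_empty_iff]
  intro p _
  simp

lemma invDist_triangle (α γ β : Equiv.Perm (Fin n)) :
    invDist α β ≤ invDist α γ + invDist γ β := by
  unfold invDist
  refine le_trans (Finset.card_le_card ?_) (Finset.card_union_le _ _)
  intro p hp
  simp only [Finset.mem_filter, Finset.mem_union, Finset.mem_univ, true_and] at *
  by_cases h : γ⁻¹ p.1 < γ⁻¹ p.2 ↔ β⁻¹ p.1 < β⁻¹ p.2
  · exact Or.inl ⟨hp.1, fun hc => hp.2 (hc.trans h)⟩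
  · exact Or.inr ⟨hp.1, h⟩

lemma invDist_path_le (c : ℕ → Equiv.Perm (Fin n)) (a : ℕ) :
    ∀ m, a ≤ m → invDist (c a) (c m) ≤ ∑ i ∈ Finset.Ico a m, invDist (c i) (c (i+1)) := by
  intro m hm
  induction m, hm using Nat.le_induction with
  | base => simp [invDist_self]
  | succ m hm ih =>
    rw [Finset.sum_Ico_succ_top hm]
    have := invDist_triangle (c a) (c m) (c (m+1))
    omega

lemma invDist_strict (γ δ ε : Equiv.Perm (Fin n)) (p : Fin n × Fin n)
    (hlt : p.1 < p.2)
    (h1 : ¬ ((γ⁻¹ p.1 < γ⁻¹ p.2) ↔ (δ⁻¹ p.1 < δ⁻¹ p.2)))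
    (h3 : (γ⁻¹ p.1 < γ⁻¹ p.2) ↔ (ε⁻¹ p.1 < ε⁻¹ p.2)) :
    invDist γ ε + 1 ≤ invDist γ δ + invDist δ ε := by
  unfold invDist
  have hpin : p ∉ (Finset.univ.filter fun q : Fin n × Fin n =>
      q.1 < q.2 ∧ ¬ ((γ⁻¹ q.1 < γ⁻¹ q.2) ↔ (ε⁻¹ q.1 < ε⁻¹ q.2))) := by
    simp only [Finset.mem_filter, Finset.mem_univ, true_and, not_and, not_not]
    intro _
    exact h3
  rw [← Finset.card_insert_of_notMem hpin]
  refine le_trans (Finset.card_le_card ?_) (Finset.card_union_le _ _)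
  intro q hq
  rw [Finset.mem_insert] at hq
  simp only [Finset.mem_filter, Finset.mem_union, Finset.mem_univ, true_and]
  rcases hq with rfl | hq
  · exact Or.inl ⟨hlt, h1⟩
  · simp only [Finset.mem_filter, Finset.mem_univ, true_and] at hq
    by_cases h : δ⁻¹ q.1 < δ⁻¹ q.2 ↔ ε⁻¹ q.1 < ε⁻¹ q.2
    · exact Or.inl ⟨hq.1, fun hc => hq.2 (hc.trans h)⟩
    · exact Or.inr ⟨hq.1, h⟩

end Aux

/-- On the vertex set of a permutograph, a function is a discrete piecewise
linear function iff it satisfies the separation property. -/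
theorem isDPL_iff_sepProp {n : ℕ} (S : Set (Equiv.Perm (Fin n))) (hS : S.Nonempty)
    (hperm : IsPermutograph S) (F : Equiv.Perm (Fin n) → Fin n) :
    IsDPL S F ↔ SepProp S F := by
  constructor
  · -- DPL → Sep
    intro hdpl α hα β hβ
    obtain ⟨m, c, hc0, hcm, hmem, hadj, hsum⟩ := hperm α hα β hβ
    have hstep : ∀ i < m, ∃ w : Fin n,
        (c i)⁻¹ w ≤ (c i)⁻¹ (F (c i)) ∧
        (c (i+1))⁻¹ (F (c (i+1))) ≤ (c (i+1))⁻¹ w := by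
      intro i hi
      obtain ⟨τ, ⟨b, hb⟩, hτ, heq⟩ := hadj i hi
      have hbeq := hdpl (c i) (hmem i hi.le) (c (i+1)) (hmem (i+1) hi) τ b hb hτ heq
      refine ⟨c i ((b ((c i)⁻¹ (F (c i)))).1), ?_, ?_⟩
      · rw [Equiv.Perm.coe_inv, Equiv.symm_apply_apply]
        exact (hb ((c i)⁻¹ (F (c i)))).1
      · have hkey : (c (i+1))⁻¹ (c i ((b ((c i)⁻¹ (F (c i)))).1)) =
            τ ((b ((c i)⁻¹ (F (c i)))).1) := by
          rw [heq]
          simp [Equiv.Perm.mul_apply]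
        rw [hkey, bd_tau_lo hb, hbeq]
        exact (hb ((c (i+1))⁻¹ (F (c (i+1))))).2.1
    have key : ∀ k ≤ m, ∃ u : Fin n,
        (c 0)⁻¹ u ≤ (c 0)⁻¹ (F (c 0)) ∧ (c k)⁻¹ (F (c k)) ≤ (c k)⁻¹ u := by
      intro k
      induction k with
      | zero => exact fun _ => ⟨F (c 0), le_rfl, le_rfl⟩
      | succ k ih =>
        intro hk1
        obtain ⟨u, hu1, hu2⟩ := ih (le_of_lt hk1)
        obtain ⟨v, hv1, hv2⟩ := hstep k hk1
        by_cases hc1 : (c (k+1))⁻¹ (F (c (k+1))) ≤ (c (k+1))⁻¹ u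
        · exact ⟨u, hu1, hc1⟩
        by_cases hc2 : (c 0)⁻¹ v ≤ (c 0)⁻¹ (F (c 0))
        · exact ⟨v, hc2, hv2⟩
        exfalso
        push_neg at hc1 hc2
        have h0 : (c 0)⁻¹ u < (c 0)⁻¹ v := lt_of_le_of_lt hu1 hc2
        have hk1' : (c (k+1))⁻¹ u < (c (k+1))⁻¹ v := lt_of_lt_of_le hc1 hv2
        have hne : u ≠ v := fun h => absurd (h ▸ h0) (lt_irrefl _)
        have hkk : (c k)⁻¹ v < (c k)⁻¹ u := by
          rcases lt_or_eq_of_le (le_trans hv1 hu2) with h | h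
          · exact h
          · exact absurd (Equiv.injective _ h) hne.symm
        have hstrict : invDist (c 0) (c (k+1)) + 1 ≤
            invDist (c 0) (c k) + invDist (c k) (c (k+1)) := by
          rcases lt_or_gt_of_ne hne with hxy | hxy
          · exact invDist_strict _ _ _ (u, v) hxy
              (fun h => absurd (h.mp h0) (asymm hkk))
              (iff_of_true h0 hk1')
          · exact invDist_strict _ _ _ (v, u) hxy
              (fun h => absurd (h.mpr hkk) (asymm h0))
              (iff_of_false (asymm h0) (asymm hk1'))
        have hpre : ∑ i ∈ Finset.Ico 0 (k+1), invDist (c i) (c (i+1)) ≤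
            invDist (c 0) (c (k+1)) := by
          have hsplit : ∑ i ∈ Finset.range m, invDist (c i) (c (i+1)) =
              ∑ i ∈ Finset.Ico 0 (k+1), invDist (c i) (c (i+1)) +
              ∑ i ∈ Finset.Ico (k+1) m, invDist (c i) (c (i+1)) := by
            rw [Finset.range_eq_Ico, ← Finset.sum_Ico_consecutive _ (Nat.zero_le _) hk1]
          have h1 := invDist_triangle (c 0) (c (k+1)) (c m)
          have h2 := invDist_path_le c (k+1) m hk1
          rw [← hc0, ← hcm] at hsum
          omega
        have hA := invDist_path_le c 0 k (Nat.zero_le _)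
        have hsplit2 : ∑ i ∈ Finset.Ico 0 (k+1), invDist (c i) (c (i+1)) =
            ∑ i ∈ Finset.Ico 0 k, invDist (c i) (c (i+1)) + invDist (c k) (c (k+1)) := by
          rw [Finset.sum_Ico_succ_top (Nat.zero_le k)]
        omega
    obtain ⟨u, h1, h2⟩ := key m le_rfl
    rw [hc0] at h1
    rw [hcm] at h2
    exact ⟨u, h1, h2⟩
  · -- Sep → DPL
    intro hsep α hα β hβ τ b hb hτ heq
    obtain ⟨u, hu1, hu2⟩ := hsep α hα β hβ
    obtain ⟨v, hv1, hv2⟩ := hsep β hβ α hα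
    have hus : β⁻¹ u = τ (α⁻¹ u) := by
      rw [heq]; simp [Equiv.Perm.mul_apply]
    have hvs : β⁻¹ v = τ (α⁻¹ v) := by
      rw [heq]; simp [Equiv.Perm.mul_apply]
    rw [hus] at hu2
    rw [hvs] at hv1
    -- chain 1 : b Q = b P ∨ (b Q).2 < (b P).1
    have t1 := bd_tri hb hu2
    rw [bd_tau_mem hb] at t1
    have hQP := bd_chain hb t1 (bd_tri hb hu1)
    -- chain 2 : b P = b Q ∨ (b P).2 < (b Q).1
    have t2 := bd_tri hb hv1
    rw [bd_tau_mem hb] at t2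
    have hPQ := bd_chain hb (bd_tri hb hv2) t2
    rcases hPQ with hPQ | hPQ
    · exact hPQ
    rcases hQP with hQP | hQP
    · exact hQP.symm
    exact absurd (((hPQ.trans_le (bd_lo_le_hi hb _)).trans hQP).trans_le
      (bd_lo_le_hi hb _)) (lt_irrefl _)
end

section
/- If F : S → X satisfies the separation property (for any α, β ∈ S there is u with u ≤_α F(α) and u ≥_β F(β)), and α, β ∈ S are π-adjacent for an ordered partition π = (X_1,...,X_m), with F(α) ∈ α(X_i) and F(β) ∈ β(X_j), then i = j. -/
/-- If `F` satisfies the separation property and `α, β ∈ S` are `π`-adjacent with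
`F(α) ∈ α(X_i)` and `F(β) ∈ β(X_j)`, then `i = j`: the positions `α⁻¹(F(α))` and
`β⁻¹(F(β))` lie in the same block of `π`. -/
theorem sepProp_same_block {n : ℕ} (S : Set (Equiv.Perm (Fin n)))
    (F : Equiv.Perm (Fin n) → Fin n) (hF : SepProp S F)
    (α β : Equiv.Perm (Fin n)) (hα : α ∈ S) (hβ : β ∈ S)
    (τ : Equiv.Perm (Fin n)) (b : Fin n → Fin n × Fin n)
    (hb : IsBlockData b τ) (hτ : τ ≠ 1) (hadj : α = β * τ) :
    b (α⁻¹ (F α)) = b (β⁻¹ (F β)) := by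
  classical
  have hτmem : ∀ i : Fin n, ((b i).1 : ℕ) ≤ (τ i : ℕ) ∧ (τ i : ℕ) ≤ ((b i).2 : ℕ) := by
    intro i
    obtain ⟨h1, h2, h3, h4⟩ := hb i
    rw [Fin.le_def] at h1 h2
    omega
  have hτinv : ∀ i, τ (τ i) = i := by
    intro i
    obtain ⟨h1, h2, h3, h4⟩ := hb i
    have hbτ : b (τ i) = b i :=
      h3 (τ i) (Fin.le_def.mpr (hτmem i).1) (Fin.le_def.mpr (hτmem i).2)
    have h4' := (hb (τ i)).2.2.2
    rw [hbτ] at h4'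
    rw [Fin.le_def] at h1 h2
    exact Fin.ext (by omega)
  have hτsymm : ∀ x, τ⁻¹ x = τ x := by
    intro x
    have h := congrArg (fun y => τ⁻¹ y) (hτinv x)
    simpa using h.symm
  have hαinv : ∀ x, α⁻¹ x = τ (β⁻¹ x) := by
    intro x
    rw [hadj, mul_inv_rev]
    simp [hτsymm]
    exact hτsymm _
  obtain ⟨u, hu1, hu2⟩ := hF α hα β hβ
  obtain ⟨v, hv1, hv2⟩ := hF β hβ α hα
  set p := α⁻¹ (F α) with hp
  set q := β⁻¹ (F β) with hq
  rw [hαinv u] at hu1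
  rw [hαinv v] at hv2
  set s := β⁻¹ u with hs
  set t := β⁻¹ v with ht
  obtain ⟨hms1, hms2⟩ := hτmem s
  obtain ⟨hmt1, hmt2⟩ := hτmem t
  obtain ⟨hp1, hp2, hp3, -⟩ := hb p
  obtain ⟨hq1, hq2, hq3, -⟩ := hb q
  obtain ⟨hs1, hs2, hs3, -⟩ := hb s
  obtain ⟨ht1, ht2, ht3, -⟩ := hb t
  rw [Fin.le_def] at hp1 hp2 hq1 hq2 hs1 hs2 ht1 ht2 hu1 hu2 hv1 hv2
  by_contra hne
  rcases lt_or_ge ((b p).2 : ℕ) ((b q).1 : ℕ) with hc1 | hc1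
  · rcases le_or_gt ((b s).1 : ℕ) (q : ℕ) with hc2 | hc2
    · have hbqs : b q = b s :=
        hs3 q (Fin.le_def.mpr hc2) (Fin.le_def.mpr (by omega))
      have e1 : ((b q).1 : ℕ) = ((b s).1 : ℕ) := by rw [hbqs]
      omega
    · omega
  · rcases lt_or_ge ((b q).2 : ℕ) ((b p).1 : ℕ) with hc3 | hc3
    · rcases le_or_gt (q : ℕ) ((b t).2 : ℕ) with hc4 | hc4
      · have hbqt : b q = b t :=
          ht3 q (Fin.le_def.mpr (by omega)) (Fin.le_def.mpr hc4)
        have e1 : ((b q).2 : ℕ) = ((b t).2 : ℕ) := by rw [hbqt]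
        omega
      · omega
    · -- blocks overlap, so they coincide
      have hwp : b (max (b p).1 (b q).1) = b p :=
        hp3 _ (le_max_left _ _)
          (max_le (Fin.le_def.mpr (by omega)) (Fin.le_def.mpr hc1))
      have hwq : b (max (b p).1 (b q).1) = b q :=
        hq3 _ (le_max_right _ _)
          (max_le (Fin.le_def.mpr hc3) (Fin.le_def.mpr (by omega)))
      exact hne (hwp.symm.trans hwq)
end

section
/- Every lattice polynomial function F(α) = ⋁_{i∈I} ⋀_{j∈K_i} j (operations taken in the order ≤_α) on a set S of permutations satisfies the separation property: for all α, β ∈ S there exists u ∈ X with u ≤_α F(α) and u ≥_β F(β). -/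
/-- Every lattice polynomial function on a set of permutations satisfies the
separation property. -/
theorem isLatticePoly_sepProp {n : ℕ} (S : Set (Equiv.Perm (Fin n)))
    (F : Equiv.Perm (Fin n) → Fin n) (hF : IsLatticePoly S F) :
    SepProp S F := by
  obtain ⟨𝒦, h𝒦, hK, hpoly⟩ := hF
  intro α hα β hβ
  obtain ⟨K₀, hK₀mem, hK₀⟩ := Finset.exists_mem_eq_sup'
    (Finset.attach_nonempty_iff.mpr h𝒦) (fun K => K.1.inf' (hK K.1 K.2) fun j => β⁻¹ j)
  obtain ⟨u, hu, huinf⟩ := Finset.exists_mem_eq_inf' (hK K₀.1 K₀.2) (fun j => α⁻¹ j)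
  refine ⟨u, ?_, ?_⟩
  · rw [hpoly α hα, (by intro x; exact Equiv.symm_apply_apply α x : ∀ x, α⁻¹ (α x) = x)]
    rw [← huinf]
    exact Finset.le_sup' (fun K : {x // x ∈ 𝒦} => K.1.inf' (hK K.1 K.2) fun j => α⁻¹ j) hK₀mem
  · rw [hpoly β hβ, (by intro x; exact Equiv.symm_apply_apply β x : ∀ x, β⁻¹ (β x) = x), hK₀]
    exact Finset.inf'_le _ hu
end

section
/- Every continuous piecewise linear function f on a convex closed domain D ⊆ ℝ^d is representable as a difference of two concave piecewise linear functions. -/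
/-- A closed domain in `ℝ^d`: the closure of a nonempty open set. -/
def IsClosedDomain {d : ℕ} (P : Set (Fin d → ℝ)) : Prop :=
  ∃ U : Set (Fin d → ℝ), U.Nonempty ∧ IsOpen U ∧ P = closure U

/-- `f` is piecewise linear on `D`: `D` is a finite union of closed domains on
each of which `f` agrees with an affine linear function. -/
def IsPLOn {d : ℕ} (D : Set (Fin d → ℝ)) (f : (Fin d → ℝ) → ℝ) : Prop :=
  ∃ 𝒟 : Finset (Set (Fin d → ℝ)),
    (∀ P ∈ 𝒟, IsClosedDomain P) ∧ (⋃ P ∈ 𝒟, P) = D ∧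
    ∀ P ∈ 𝒟, ∃ g : (Fin d → ℝ) →ᵃ[ℝ] ℝ, ∀ x ∈ P, f x = g x

/-- `f` coincides on `D` with the max-min lattice polynomial
`x ↦ ⋁_{K ∈ 𝒦} ⋀_{j ∈ K} g j x` for some nonempty family `𝒦` of nonempty
subsets of `{1,…,n}`. -/
def MaxMinRep {d n : ℕ} (D : Set (Fin d → ℝ)) (g : Fin n → ((Fin d → ℝ) →ᵃ[ℝ] ℝ))
    (f : (Fin d → ℝ) → ℝ) : Prop :=
  ∃ (𝒦 : Finset (Finset (Fin n))) (h𝒦 : 𝒦.Nonempty) (hK : ∀ K ∈ 𝒦, K.Nonempty),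
    ∀ x ∈ D, f x = 𝒦.attach.sup' (Finset.attach_nonempty_iff.mpr h𝒦)
      (fun K => K.1.inf' (hK K.1 K.2) (fun j => g j x))



open Set Topology Filter

/-- An affine function `t ↦ a*t+b` is concave on any set. -/
lemma affine_concaveOn (s : Set ℝ) (hs : Convex ℝ s) (a b : ℝ) :
    ConcaveOn ℝ s (fun t : ℝ => a * t + b) := by
  refine ⟨hs, fun x _ y _ p q hp hq hpq => ?_⟩
  simp only [smul_eq_mul]
  exact le_of_eq (by linear_combination b * hpq)

lemma affine_convexOn (s : Set ℝ) (hs : Convex ℝ s) (a b : ℝ) :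
    ConvexOn ℝ s (fun t : ℝ => a * t + b) := by
  refine ⟨hs, fun x _ y _ p q hp hq hpq => ?_⟩
  simp only [smul_eq_mul]
  exact le_of_eq (by linear_combination -b * hpq)

lemma concaveOn_congr {E : Type*} [AddCommGroup E] [Module ℝ E] {s : Set E}
    {f g : E → ℝ} (h : ConcaveOn ℝ s f) (hfg : Set.EqOn f g s) : ConcaveOn ℝ s g := by
  refine ⟨h.1, fun x hx y hy p q hp hq hpq => ?_⟩
  rw [← hfg hx, ← hfg hy, ← hfg (h.1 hx hy hp hq hpq)]
  exact h.2 hx hy hp hq hpq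

/-- Extend an equality with a continuous function from a set to its closure,
staying inside a set `D` on which `p` is continuous. -/
lemma eqOn_closure_of_continuousOn {E : Type*} [TopologicalSpace E]
    {D s : Set E} {p a : E → ℝ} (hp : ContinuousOn p D) (ha : Continuous a)
    (hcl : closure s ⊆ D) (h : Set.EqOn p a s) : Set.EqOn p a (closure s) := by
  intro x hx
  have hxD : x ∈ D := hcl hx
  have hne : (𝓝[s] x).NeBot := mem_closure_iff_nhdsWithin_neBot.1 hx
  have h1 : Filter.Tendsto p (𝓝[s] x) (𝓝 (p x)) :=
    (hp x hxD).mono_left (nhdsWithin_mono x (subset_closure.trans hcl))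
  have h2 : Filter.Tendsto a (𝓝[s] x) (𝓝 (p x)) := by
    refine h1.congr' ?_
    filter_upwards [self_mem_nhdsWithin] with y hy using (h hy)
  have h3 : Filter.Tendsto a (𝓝[s] x) (𝓝 (a x)) :=
    (ha.tendsto x).mono_left nhdsWithin_le_nhds
  exact tendsto_nhds_unique h2 h3



lemma open_subset_finite_union_empty {E : Type*} [TopologicalSpace E] {ι : Type*}
    (s : Finset ι) (Z : ι → Set E) (hZc : ∀ i, IsClosed (Z i))
    (hZe : ∀ i, interior (Z i) = ∅) :
    ∀ O : Set E, IsOpen O → O ⊆ ⋃ i ∈ s, Z i → O = ∅ := by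
  classical
  induction s using Finset.induction_on with
  | empty => intro O _ hsub; simpa using hsub
  | @insert i s hi ih =>
    intro O hO hsub
    have h1 : O ∩ (Z i)ᶜ = ∅ := by
      refine ih (O ∩ (Z i)ᶜ) (hO.inter (hZc i).isOpen_compl) ?_
      intro y ⟨hyO, hyZ⟩
      have := hsub hyO
      simp only [Finset.mem_insert, mem_iUnion, exists_prop] at this ⊢
      obtain ⟨j, hj1 | hj1, hj2⟩ := this
      · exact absurd (hj1 ▸ hj2) hyZ
      · exact ⟨j, hj1, hj2⟩
    have h2 : O ⊆ Z i := by
      intro y hy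
      by_contra hyZ
      exact Set.eq_empty_iff_forall_notMem.1 h1 y ⟨hy, hyZ⟩
    have h3 : O ⊆ interior (Z i) := by
      rw [← hO.interior_eq]; exact interior_mono h2
    rw [hZe i] at h3
    exact subset_empty_iff.1 h3

lemma mem_closure_diff_of_meager {E : Type*} [TopologicalSpace E] {U Z : Set E}
    (hZ : ∀ O : Set E, IsOpen O → O ⊆ Z → O = ∅) (hU : IsOpen U) :
    ∀ x ∈ closure U, x ∈ closure (U \ Z) := by
  intro x hx
  rw [mem_closure_iff] at hx ⊢
  intro o ho hxo
  have h1 : (o ∩ U).Nonempty := hx o ho hxo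
  by_contra hne
  rw [Set.not_nonempty_iff_eq_empty] at hne
  have h2 : o ∩ U ⊆ Z := by
    intro y ⟨hyo, hyU⟩
    by_contra hyZ
    exact Set.eq_empty_iff_forall_notMem.1 hne y ⟨hyo, hyU, hyZ⟩
  exact absurd (hZ _ (ho.inter hU) h2) (Set.nonempty_iff_ne_empty.1 h1)

lemma branch_const {n : ℕ} (a b : Fin n → ℝ) {s : Set ℝ} (hs : IsPreconnected s)
    {φ : ℝ → ℝ} (hφ : ContinuousOn φ s)
    (hsel : ∀ t ∈ s, ∃ i, φ t = a i * t + b i)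
    (H : ∀ i j : Fin n, (∀ t ∈ s, a i * t + b i ≠ a j * t + b j) ∨
      (∀ t ∈ s, a i * t + b i = a j * t + b j))
    (k : Fin n) {t₁ : ℝ} (ht₁ : t₁ ∈ s) (hk : φ t₁ = a k * t₁ + b k) :
    ∀ t ∈ s, φ t = a k * t + b k := by
  haveI : PreconnectedSpace s := isPreconnected_iff_preconnectedSpace.1 hs
  set F : Set s := {t : s | φ t = a k * (t : ℝ) + b k} with hF
  have hclosed : ∀ m : Fin n, IsClosed {t : s | φ t = a m * (t : ℝ) + b m} := by
    intro m
    have hc : Continuous fun t : s => φ t - (a m * (t : ℝ) + b m) :=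
      (hφ.restrict).sub (by continuity)
    have : {t : s | φ t = a m * (t : ℝ) + b m}
        = (fun t : s => φ t - (a m * (t : ℝ) + b m)) ⁻¹' {0} := by
      ext t; simp [sub_eq_zero]
    rw [this]
    exact IsClosed.preimage hc isClosed_singleton
  have hcompl : Fᶜ = ⋃ i : {i : Fin n // ∀ t ∈ s, a i * t + b i ≠ a k * t + b k},
      {t : s | φ t = a i.1 * (t : ℝ) + b i.1} := by
    ext t
    simp only [mem_compl_iff, mem_iUnion, mem_setOf_eq, hF]
    constructor
    · intro ht
      obtain ⟨i, hi⟩ := hsel t t.2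
      rcases H i k with hbad | hgood
      · exact ⟨⟨i, hbad⟩, hi⟩
      · exact absurd (hi.trans (hgood t t.2)) ht
    · rintro ⟨⟨i, hbad⟩, hi⟩
      rw [hi]
      exact hbad t t.2
  have hopen : IsOpen F := by
    rw [← compl_compl F, isOpen_compl_iff, hcompl]
    exact isClosed_iUnion_of_finite fun i => hclosed i.1
  have hclopen : IsClopen F := ⟨hclosed k, hopen⟩
  rcases isClopen_iff.1 hclopen with h | h
  · exact absurd h (Set.nonempty_iff_ne_empty.1 ⟨⟨t₁, ht₁⟩, hk⟩)
  · intro t ht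
    have : (⟨t, ht⟩ : s) ∈ F := h ▸ mem_univ _
    exact this



lemma affine_concaveOn' (s : Set ℝ) (hs : Convex ℝ s) (a b : ℝ) :
    ConcaveOn ℝ s (fun t : ℝ => a * t + b) := by
  refine ⟨hs, fun x _ y _ p q hp hq hpq => ?_⟩
  simp only [smul_eq_mul]
  exact le_of_eq (by linear_combination b * hpq)

/-- A continuous nonvanishing function on `[u,v]` has constant sign. -/
lemma sign_const {u v : ℝ} {g : ℝ → ℝ} (hg : ContinuousOn g (Set.Icc u v))
    (h : ∀ t ∈ Set.Icc u v, g t ≠ 0) :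
    (∀ t ∈ Set.Icc u v, 0 < g t) ∨ (∀ t ∈ Set.Icc u v, g t < 0) := by
  by_contra hc
  push_neg at hc
  obtain ⟨⟨t₁, ht₁, ht₁'⟩, ⟨t₂, ht₂, ht₂'⟩⟩ := hc
  have h₁ : g t₁ < 0 := lt_of_le_of_ne ht₁' (h t₁ ht₁)
  have h₂ : 0 < g t₂ := lt_of_le_of_ne (by linarith [ht₂']) (Ne.symm (h t₂ ht₂))
  have hsub : Set.uIcc t₁ t₂ ⊆ Set.Icc u v := Set.uIcc_subset_Icc ht₁ ht₂
  have := intermediate_value_uIcc (hg.mono hsub)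
  have h0 : (0:ℝ) ∈ Set.uIcc (g t₁) (g t₂) := by
    rw [Set.mem_uIcc]; left; exact ⟨le_of_lt h₁, le_of_lt h₂⟩
  obtain ⟨t, ht, ht0⟩ := this h0
  exact h t (hsub ht) ht0

/-- Local concavity (on small closed intervals) plus continuity gives the
endpoint interpolation inequality on `[0,1]`. -/
lemma le_of_local_concave {ψ : ℝ → ℝ} (hcont : ContinuousOn ψ (Set.Icc 0 1))
    (hloc : ∀ c ∈ Set.Ioo (0:ℝ) 1, ∃ ε > 0, Set.Icc (c - ε) (c + ε) ⊆ Set.Icc 0 1 ∧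
      ConcaveOn ℝ (Set.Icc (c - ε) (c + ε)) ψ) :
    ∀ t ∈ Set.Icc (0:ℝ) 1, (1 - t) * ψ 0 + t * ψ 1 ≤ ψ t := by
  set χ : ℝ → ℝ := fun t => ψ t + ((ψ 0 - ψ 1) * t + (- ψ 0)) with hχ
  have hχcont : ContinuousOn χ (Set.Icc 0 1) := hcont.add (by fun_prop)
  have hχ0 : χ 0 = 0 := by simp [hχ]
  have hχ1 : χ 1 = 0 := by simp [hχ]; ring
  have key : ∀ t ∈ Set.Icc (0:ℝ) 1, 0 ≤ χ t := by
    by_contra hc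
    push_neg at hc
    obtain ⟨t₂, ht₂, ht₂'⟩ := hc
    obtain ⟨x₀, hx₀, hmin⟩ := isCompact_Icc.exists_isMinOn (Set.nonempty_Icc.2 zero_le_one) hχcont
    set m := χ x₀ with hm
    have hmneg : m < 0 := lt_of_le_of_lt (hmin ht₂) ht₂'
    have hminle : ∀ t ∈ Set.Icc (0:ℝ) 1, m ≤ χ t := fun t ht => hmin ht
    set T : Set ℝ := Set.Icc 0 1 ∩ χ ⁻¹' {m} with hT
    have hTclosed : IsClosed T :=
      hχcont.preimage_isClosed_of_isClosed isClosed_Icc isClosed_singleton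
    have hTne : T.Nonempty := ⟨x₀, hx₀, rfl⟩
    have hTbdd : BddAbove T := BddAbove.mono (Set.inter_subset_left) bddAbove_Icc
    set c := sSup T with hc
    have hcT : c ∈ T := hTclosed.csSup_mem hTne hTbdd
    have hcIcc : c ∈ Set.Icc (0:ℝ) 1 := hcT.1
    have hcm : χ c = m := hcT.2
    have hc0 : c ≠ 0 := fun h => by rw [h, hχ0] at hcm; linarith
    have hc1 : c ≠ 1 := fun h => by rw [h, hχ1] at hcm; linarith
    have hcIoo : c ∈ Set.Ioo (0:ℝ) 1 :=
      ⟨lt_of_le_of_ne hcIcc.1 (Ne.symm hc0), lt_of_le_of_ne hcIcc.2 hc1⟩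
    obtain ⟨ε, hε, hsub, hconc⟩ := hloc c hcIoo
    have hχconc : ConcaveOn ℝ (Set.Icc (c - ε) (c + ε)) χ :=
      hconc.add (affine_concaveOn' _ (convex_Icc _ _) (ψ 0 - ψ 1) (- ψ 0))
    have hsm : c - ε ∈ Set.Icc (c - ε) (c + ε) := by constructor <;> linarith
    have hrm : c + ε ∈ Set.Icc (c - ε) (c + ε) := by constructor <;> linarith
    have hs01 : c - ε ∈ Set.Icc (0:ℝ) 1 := hsub hsm
    have hr01 : c + ε ∈ Set.Icc (0:ℝ) 1 := hsub hrm
    have hχr : m < χ (c + ε) := by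
      rcases lt_or_eq_of_le (hminle _ hr01) with h | h
      · exact h
      · exfalso
        have : c + ε ∈ T := ⟨hr01, h.symm⟩
        have := le_csSup hTbdd this
        linarith
    have hχs : m ≤ χ (c - ε) := hminle _ hs01
    have hcomb : (1/2 : ℝ) * χ (c - ε) + (1/2 : ℝ) * χ (c + ε) ≤
        χ ((1/2 : ℝ) * (c - ε) + (1/2 : ℝ) * (c + ε)) := by
      have := hχconc.2 hsm hrm (by norm_num : (0:ℝ) ≤ 1/2) (by norm_num : (0:ℝ) ≤ 1/2)
        (by norm_num : (1/2 : ℝ) + 1/2 = 1)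
      simpa only [smul_eq_mul] using this
    have hmid : (1/2 : ℝ) * (c - ε) + (1/2 : ℝ) * (c + ε) = c := by ring
    rw [hmid, hcm] at hcomb
    clear_value c T m χ
    linarith
  intro t ht
  have := key t ht
  simp only [hχ] at this
  linarith


noncomputable def psiFun {n : ℕ} (a b : Fin n → ℝ) (φ : ℝ → ℝ) : ℝ → ℝ :=
  fun t => φ t - ∑ p : Fin n × Fin n, |(a p.1 - a p.2) * t + (b p.1 - b p.2)|

lemma psi_localConcave {n : ℕ} (a b : Fin n → ℝ) {φ : ℝ → ℝ}
    (hφ : ContinuousOn φ (Set.Icc 0 1))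
    (hsel : ∀ t ∈ Set.Icc (0:ℝ) 1, ∃ i, φ t = a i * t + b i)
    {c : ℝ} (hc : c ∈ Set.Ioo (0:ℝ) 1) :
    ∃ ε > 0, Set.Icc (c - ε) (c + ε) ⊆ Set.Icc 0 1 ∧
      ConcaveOn ℝ (Set.Icc (c - ε) (c + ε)) (psiFun a b φ) := by
  classical
  set Δ : Fin n × Fin n → ℝ → ℝ :=
    fun p t => (a p.1 - a p.2) * t + (b p.1 - b p.2) with hΔ
  -- Step 1 : a good ε
  have hnbh : {t : ℝ | ∀ p : Fin n × Fin n, Δ p c ≠ 0 → Δ p t ≠ 0} ∈ 𝓝 c := by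
    have : {t : ℝ | ∀ p : Fin n × Fin n, Δ p c ≠ 0 → Δ p t ≠ 0}
        = ⋂ p : Fin n × Fin n, {t | Δ p c ≠ 0 → Δ p t ≠ 0} := by
      ext t; simp [Set.mem_iInter]
    rw [this]
    refine Filter.iInter_mem.2 fun p => ?_
    by_cases hp : Δ p c = 0
    · refine Filter.mem_of_superset Filter.univ_mem ?_
      intro t _ h; exact absurd hp h
    · have hopen : IsOpen {t : ℝ | Δ p t ≠ 0} := by
        have : Continuous (Δ p) := by fun_prop
        exact isOpen_ne.preimage this
      refine Filter.mem_of_superset (hopen.mem_nhds hp) ?_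
      intro t ht _; exact ht
  have hIoo : Set.Ioo (0:ℝ) 1 ∈ 𝓝 c := isOpen_Ioo.mem_nhds hc
  obtain ⟨r, hr, hball⟩ := Metric.mem_nhds_iff.1 (Filter.inter_mem hnbh hIoo)
  set ε := r / 2 with hε'
  have hεpos : 0 < ε := by positivity
  have hJsub : ∀ t ∈ Set.Icc (c - ε) (c + ε),
      (∀ p : Fin n × Fin n, Δ p c ≠ 0 → Δ p t ≠ 0) ∧ t ∈ Set.Ioo (0:ℝ) 1 := by
    intro t ht
    have : t ∈ Metric.ball c r := by
      rw [Metric.mem_ball, Real.dist_eq, abs_sub_lt_iff]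
      constructor <;> [linarith [ht.2]; linarith [ht.1]]
    exact hball this
  have hJ01 : Set.Icc (c - ε) (c + ε) ⊆ Set.Icc (0:ℝ) 1 := by
    intro t ht
    have := (hJsub t ht).2
    exact ⟨le_of_lt this.1, le_of_lt this.2⟩
  have hnz : ∀ p : Fin n × Fin n, Δ p c ≠ 0 →
      ∀ t ∈ Set.Icc (c - ε) (c + ε), Δ p t ≠ 0 :=
    fun p hp t ht => (hJsub t ht).1 p hp
  -- the two subintervals sit inside the window
  have hIocJ : Set.Ioc c (c + ε) ⊆ Set.Icc (c - ε) (c + ε) := by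
    intro t ht; exact ⟨by linarith [ht.1], ht.2⟩
  have hIcoJ : Set.Ico (c - ε) c ⊆ Set.Icc (c - ε) (c + ε) := by
    intro t ht; exact ⟨ht.1, by linarith [ht.2]⟩
  -- Step 2 : identify the branches on the two sides
  have hbranch : ∀ (s : Set ℝ), s ⊆ Set.Icc (c - ε) (c + ε) → IsPreconnected s →
      (∀ t ∈ s, t ≠ c) → ∀ t₁ ∈ s, ∃ k, ∀ t ∈ s, φ t = a k * t + b k := by
    intro s hsJ hspre hsc t₁ ht₁
    have hs01 : s ⊆ Set.Icc (0:ℝ) 1 := hsJ.trans hJ01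
    have H : ∀ i j : Fin n, (∀ t ∈ s, a i * t + b i ≠ a j * t + b j) ∨
        (∀ t ∈ s, a i * t + b i = a j * t + b j) := by
      intro i j
      by_cases h1 : Δ (i, j) c = 0
      · by_cases h2 : a i = a j
        · right
          intro t _
          have hb : b i - b j = 0 := by
            have := h1
            simp only [hΔ] at this
            rw [h2] at this
            linarith [this]
          rw [h2]; linarith [hb]
        · left
          intro t hts heq
          have hΔt : Δ (i, j) t = 0 := by simp only [hΔ]; linarith [heq]
          have : (a i - a j) * (t - c) = 0 := by
            simp only [hΔ] at hΔt h1; linarith [hΔt, h1]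
          rcases mul_eq_zero.1 this with h | h
          · exact h2 (by linarith)
          · exact hsc t hts (by linarith)
      · left
        intro t hts heq
        exact hnz (i, j) h1 t (hsJ hts) (by simp only [hΔ]; linarith [heq])
    obtain ⟨k, hk⟩ := hsel t₁ (hs01 ht₁)
    exact ⟨k, branch_const a b hspre (hφ.mono hs01)
      (fun t ht => hsel t (hs01 ht)) H k ht₁ hk⟩
  obtain ⟨i, hi⟩ := hbranch (Set.Ioc c (c + ε)) hIocJ isPreconnected_Ioc
    (fun t ht => ne_of_gt ht.1) (c + ε) ⟨by linarith, le_refl _⟩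
  obtain ⟨j, hj⟩ := hbranch (Set.Ico (c - ε) c) hIcoJ isPreconnected_Ico
    (fun t ht => ne_of_lt ht.2) (c - ε) ⟨le_refl _, by linarith⟩
  -- extend to the closed intervals
  have hne1 : c ≠ c + ε := by linarith
  have hne2 : c - ε ≠ c := by linarith
  have hright : ∀ t ∈ Set.Icc c (c + ε), φ t = a i * t + b i := by
    have := eqOn_closure_of_continuousOn (D := Set.Icc (0:ℝ) 1)
      (s := Set.Ioc c (c + ε)) (p := φ) (a := fun t => a i * t + b i)
      hφ (by fun_prop) (by rw [closure_Ioc hne1]; exact (Set.Icc_subset_Icc (by linarith) (le_refl _)).trans hJ01) hi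
    rw [closure_Ioc hne1] at this
    exact fun t ht => this ht
  have hleft : ∀ t ∈ Set.Icc (c - ε) c, φ t = a j * t + b j := by
    have := eqOn_closure_of_continuousOn (D := Set.Icc (0:ℝ) 1)
      (s := Set.Ico (c - ε) c) (p := φ) (a := fun t => a j * t + b j)
      hφ (by fun_prop) (by rw [closure_Ico hne2]; exact (Set.Icc_subset_Icc (le_refl _) (by linarith)).trans hJ01) hj
    rw [closure_Ico hne2] at this
    exact fun t ht => this ht
  have hmatch : a i * c + b i = a j * c + b j := by
    rw [← hright c ⟨le_refl _, by linarith⟩, ← hleft c ⟨by linarith, le_refl _⟩]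
  -- Step 3 : the crossing slope sum
  set Cr : Fin n × Fin n → Prop := fun p => Δ p c = 0 ∧ a p.1 ≠ a p.2 with hCr
  set M : ℝ := ∑ p : Fin n × Fin n, (if Cr p then |a p.1 - a p.2| else 0) with hM
  have hMnonneg : 0 ≤ M := by
    rw [hM]
    refine Finset.sum_nonneg fun p _ => ?_
    split <;> [exact abs_nonneg _; exact le_refl _]
  have hK : a i - a j ≤ 2 * M ∧ a j - a i ≤ 2 * M := by
    by_cases hij : a i = a j
    · constructor <;> (rw [hij]; simp; linarith)
    · have hCrij : Cr (i, j) := by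
        refine ⟨by simp only [hΔ]; linarith [hmatch], hij⟩
      have hCrji : Cr (j, i) := by
        refine ⟨by simp only [hΔ]; linarith [hmatch], Ne.symm hij⟩
      have hijne : (i, j) ≠ (j, i) := by
        intro h
        exact hij (congrArg (fun q : Fin n × Fin n => a q.1) h ▸ rfl)
      have hsub : ({(i, j), (j, i)} : Finset (Fin n × Fin n)) ⊆ Finset.univ :=
        Finset.subset_univ _
      have hsum : ∑ p ∈ ({(i, j), (j, i)} : Finset (Fin n × Fin n)),
          (if Cr p then |a p.1 - a p.2| else 0) ≤ M := by
        rw [hM]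
        refine Finset.sum_le_sum_of_subset_of_nonneg hsub fun p _ _ => ?_
        split <;> [exact abs_nonneg _; exact le_refl _]
      rw [Finset.sum_pair hijne, if_pos hCrij, if_pos hCrji] at hsum
      simp only at hsum
      have h1 : |a i - a j| + |a j - a i| = 2 * |a i - a j| := by
        rw [abs_sub_comm (a j) (a i)]; ring
      rw [h1] at hsum
      constructor
      · calc a i - a j ≤ |a i - a j| := le_abs_self _
          _ ≤ 2 * M := by linarith [abs_nonneg (a i - a j)]
      · calc a j - a i ≤ |a i - a j| := by rw [abs_sub_comm (a i) (a j)]; exact le_abs_self _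
          _ ≤ 2 * M := by linarith [abs_nonneg (a i - a j)]
  -- Step 4 : per-pair affine decomposition
  have hpair : ∀ p : Fin n × Fin n, ∃ u v : ℝ, ∀ t ∈ Set.Icc (c - ε) (c + ε),
      |Δ p t| = (if Cr p then |a p.1 - a p.2| else 0) * |t - c| + (u * t + v) := by
    intro p
    by_cases h1 : Δ p c = 0
    · by_cases h2 : a p.1 = a p.2
      · refine ⟨0, 0, fun t ht => ?_⟩
        have hb : b p.1 - b p.2 = 0 := by
          simp only [hΔ] at h1; rw [h2] at h1; linarith [h1]
        have hCrF : ¬ Cr p := fun h => h.2 h2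
        rw [if_neg hCrF]
        simp only [hΔ, h2, hb]
        simp
      · refine ⟨0, 0, fun t ht => ?_⟩
        have hCrT : Cr p := ⟨h1, h2⟩
        rw [if_pos hCrT]
        have hb : b p.1 - b p.2 = -((a p.1 - a p.2) * c) := by
          simp only [hΔ] at h1; linarith [h1]
        have : Δ p t = (a p.1 - a p.2) * (t - c) := by
          simp only [hΔ]; rw [hb]; ring
        rw [this, abs_mul]
        ring
    · have hcont : ContinuousOn (Δ p) (Set.Icc (c - ε) (c + ε)) := by fun_prop
      rcases sign_const hcont (hnz p h1) with hpos | hneg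
      · refine ⟨a p.1 - a p.2, b p.1 - b p.2, fun t ht => ?_⟩
        have hCrF : ¬ Cr p := fun h => h1 h.1
        rw [if_neg hCrF]
        have := abs_of_pos (hpos t ht)
        simp only [hΔ] at this
        rw [show |Δ p t| = |(a p.1 - a p.2) * t + (b p.1 - b p.2)| from rfl] at *
        rw [this]; ring
      · refine ⟨-(a p.1 - a p.2), -(b p.1 - b p.2), fun t ht => ?_⟩
        have hCrF : ¬ Cr p := fun h => h1 h.1
        rw [if_neg hCrF]
        have := abs_of_neg (hneg t ht)
        rw [show |Δ p t| = |(a p.1 - a p.2) * t + (b p.1 - b p.2)| from rfl] at *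
        rw [this]; simp only [hΔ]; ring
  choose u v huv using hpair
  -- Step 5 : the explicit concave expression
  set F : ℝ → ℝ := fun t =>
    min ((a j + M) * t + (b j - M * c)) ((a i - M) * t + (b i + M * c)) +
      ((-∑ p : Fin n × Fin n, u p) * t + (-∑ p : Fin n × Fin n, v p)) with hF
  have hsum' : ∀ t ∈ Set.Icc (c - ε) (c + ε),
      (∑ p : Fin n × Fin n, |Δ p t|) =
        M * |t - c| + ((∑ p : Fin n × Fin n, u p) * t + ∑ p : Fin n × Fin n, v p) := by
    intro t ht
    have : (∑ p : Fin n × Fin n, |Δ p t|) =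
        ∑ p : Fin n × Fin n,
          ((if Cr p then |a p.1 - a p.2| else 0) * |t - c| + (u p * t + v p)) :=
      Finset.sum_congr rfl fun p _ => huv p t ht
    rw [this, Finset.sum_add_distrib, ← Finset.sum_mul, ← hM, Finset.sum_add_distrib,
      ← Finset.sum_mul]
  have hFeq : ∀ t ∈ Set.Icc (c - ε) (c + ε), F t = psiFun a b φ t := by
    intro t ht
    have hsum := hsum' t ht
    have hψ : psiFun a b φ t = φ t - (M * |t - c| +
        ((∑ p : Fin n × Fin n, u p) * t + ∑ p : Fin n × Fin n, v p)) := by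
      rw [psiFun, ← hsum]
    rcases le_total c t with hct | htc
    · have hφt : φ t = a i * t + b i := hright t ⟨hct, ht.2⟩
      have habs : |t - c| = t - c := abs_of_nonneg (by linarith)
      have hminval : min ((a j + M) * t + (b j - M * c)) ((a i - M) * t + (b i + M * c))
          = (a i - M) * t + (b i + M * c) := by
        refine min_eq_right ?_
        nlinarith [mul_nonneg (show (0:ℝ) ≤ a j - a i + 2 * M by linarith [hK.1])
          (show (0:ℝ) ≤ t - c by linarith), hmatch]
      rw [hF]
      simp only
      rw [hminval, hψ, hφt, habs]
      ring
    · have hφt : φ t = a j * t + b j := hleft t ⟨ht.1, htc⟩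
      have habs : |t - c| = -(t - c) := abs_of_nonpos (by linarith)
      have hminval : min ((a j + M) * t + (b j - M * c)) ((a i - M) * t + (b i + M * c))
          = (a j + M) * t + (b j - M * c) := by
        refine min_eq_left ?_
        nlinarith [mul_nonneg (show (0:ℝ) ≤ a j - a i + 2 * M by linarith [hK.1])
          (show (0:ℝ) ≤ c - t by linarith), hmatch]
      rw [hF]
      simp only
      rw [hminval, hψ, hφt, habs]
      ring
  -- Step 6 : conclude
  refine ⟨ε, hεpos, hJ01, ?_⟩
  have hconc1 : ConcaveOn ℝ (Set.Icc (c - ε) (c + ε))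
      (fun t => min ((a j + M) * t + (b j - M * c)) ((a i - M) * t + (b i + M * c))) := by
    have h1 := affine_concaveOn (Set.Icc (c - ε) (c + ε)) (convex_Icc _ _) (a j + M) (b j - M * c)
    have h2 := affine_concaveOn (Set.Icc (c - ε) (c + ε)) (convex_Icc _ _) (a i - M) (b i + M * c)
    have h3 := h1.inf h2
    refine concaveOn_congr h3 fun t _ => ?_
    simp [Pi.inf_apply]
  have hconc2 : ConcaveOn ℝ (Set.Icc (c - ε) (c + ε))
      (fun t : ℝ => (-∑ p : Fin n × Fin n, u p) * t + (-∑ p : Fin n × Fin n, v p)) :=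
    affine_concaveOn _ (convex_Icc _ _) _ _
  have hconcF : ConcaveOn ℝ (Set.Icc (c - ε) (c + ε)) F := by
    have := hconc1.add hconc2
    refine concaveOn_congr this fun t _ => ?_
    rw [hF]; rfl
  exact concaveOn_congr hconcF hFeq
section OneD

lemma oneD {n : ℕ} (a b : Fin n → ℝ) {φ : ℝ → ℝ}
    (hφ : ContinuousOn φ (Set.Icc 0 1))
    (hsel : ∀ t ∈ Set.Icc (0:ℝ) 1, ∃ i, φ t = a i * t + b i) :
    ∀ t ∈ Set.Icc (0:ℝ) 1,
      (1 - t) * psiFun a b φ 0 + t * psiFun a b φ 1 ≤ psiFun a b φ t := by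
  refine le_of_local_concave ?_ ?_
  · refine hφ.sub (Continuous.continuousOn ?_)
    refine continuous_finset_sum _ fun p _ => ?_
    exact (continuous_abs.comp (by fun_prop))
  · intro c hc
    exact psi_localConcave a b hφ hsel hc

end OneD

section Helpers

lemma convexOn_congr {E : Type*} [AddCommGroup E] [Module ℝ E] {s : Set E}
    {f g : E → ℝ} (h : ConvexOn ℝ s f) (hfg : Set.EqOn f g s) : ConvexOn ℝ s g := by
  refine ⟨h.1, fun x hx y hy p q hp hq hpq => ?_⟩
  rw [← hfg hx, ← hfg hy, ← hfg (h.1 hx hy hp hq hpq)]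
  exact h.2 hx hy hp hq hpq

lemma convexOn_abs_univ : ConvexOn ℝ (Set.univ : Set ℝ) (fun y : ℝ => |y|) := by
  have h1 : ConvexOn ℝ (Set.univ : Set ℝ) (fun y : ℝ => y) := convexOn_id convex_univ
  have h2 : ConvexOn ℝ (Set.univ : Set ℝ) (fun y : ℝ => -y) := by
    exact (concaveOn_id convex_univ).neg
  refine convexOn_congr (h1.sup h2) fun y _ => ?_
  simp [Pi.sup_apply, abs_eq_max_neg]

lemma convexOn_finset_sum {E : Type*} [AddCommGroup E] [Module ℝ E] {s : Set E}
    (hs : Convex ℝ s) {ι : Type*} (T : Finset ι) (F : ι → E → ℝ)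
    (h : ∀ i ∈ T, ConvexOn ℝ s (F i)) :
    ConvexOn ℝ s (fun x => ∑ i ∈ T, F i x) := by
  classical
  induction T using Finset.induction_on with
  | empty => simpa using convexOn_const (0:ℝ) hs
  | @insert i T hi ih =>
    have h1 : ConvexOn ℝ s (F i) := h i (Finset.mem_insert_self i T)
    have h2 : ConvexOn ℝ s (fun x => ∑ j ∈ T, F j x) :=
      ih fun j hj => h j (Finset.mem_insert_of_mem hj)
    refine convexOn_congr (h1.add h2) fun x _ => ?_
    simp [Finset.sum_insert hi]

lemma affine_sum_apply {d : ℕ} {ι : Type*} (T : Finset ι)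
    (F : ι → ((Fin d → ℝ) →ᵃ[ℝ] ℝ)) (x : Fin d → ℝ) :
    (∑ i ∈ T, F i) x = ∑ i ∈ T, F i x := by
  classical
  induction T using Finset.induction_on with
  | empty => simp
  | @insert i T hi ih => simp [Finset.sum_insert hi, ih]

lemma affine_zero_interior {d : ℕ} (h : (Fin d → ℝ) →ᵃ[ℝ] ℝ) (hne : h ≠ 0) :
    interior {x : Fin d → ℝ | h x = 0} = ∅ := by
  by_contra hc
  obtain ⟨x, hx⟩ := Set.nonempty_iff_ne_empty.2 hc
  obtain ⟨ε, hε, hball⟩ := Metric.mem_nhds_iff.1 (mem_interior_iff_mem_nhds.1 hx)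
  have hx0 : h x = 0 := by have h' := interior_subset hx; simpa using h'
  have hlin : ∀ w : Fin d → ℝ, h.linear w = 0 := by
    intro w
    set t := ε / (2 * (‖w‖ + 1)) with ht
    have htpos : 0 < t := by positivity
    have hmem : x + t • w ∈ Metric.ball x ε := by
      rw [Metric.mem_ball, dist_eq_norm]
      have : x + t • w - x = t • w := by abel
      rw [this, norm_smul]
      have h1 : ‖t‖ = t := abs_of_pos htpos
      rw [h1, ht]
      rw [div_mul_eq_mul_div]
      rw [div_lt_iff₀ (by positivity)]
      nlinarith [norm_nonneg w, hε]
    have h0 : h (x + t • w) = 0 := hball hmem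
    have heq : h (x + t • w) = t * h.linear w + h x := by
      have h2 : x + t • w = t • w +ᵥ x := by rw [vadd_eq_add]; abel
      rw [h2, AffineMap.map_vadd, vadd_eq_add]
      rw [LinearMap.map_smul, smul_eq_mul]
    rw [heq, hx0] at h0
    have := mul_eq_zero.1 (by linarith [h0] : t * h.linear w = 0)
    rcases this with h | h
    · exact absurd h (ne_of_gt htpos)
    · exact h
  apply hne
  ext y
  have : h y = h.linear (y - x) + h x := by
    have h2 : y = (y - x) +ᵥ x := by rw [vadd_eq_add]; abel
    conv_lhs => rw [h2]
    rw [AffineMap.map_vadd, vadd_eq_add]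
  rw [this, hlin, hx0]
  simp

end Helpers
section Main

lemma affine_cont {d : ℕ} (h : (Fin d → ℝ) →ᵃ[ℝ] ℝ) : Continuous h :=
  AffineMap.continuous_linear_iff.mp h.linear.continuous_of_finiteDimensional

lemma convexOn_abs_affine {d : ℕ} {D : Set (Fin d → ℝ)} (hconv : Convex ℝ D)
    (h : (Fin d → ℝ) →ᵃ[ℝ] ℝ) : ConvexOn ℝ D (fun x => |h x|) := by
  have h1 := convexOn_abs_univ.comp_affineMap h
  have h2 : ConvexOn ℝ D ((fun y : ℝ => |y|) ∘ h) := by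
    refine h1.subset ?_ hconv
    intro x _; simp
  exact convexOn_congr h2 fun x _ => rfl


set_option maxHeartbeats 1000000 in
/-- Every continuous piecewise linear function on a convex closed domain is the
difference of two concave piecewise linear functions. -/
theorem pl_diff_concave {d : ℕ} (D : Set (Fin d → ℝ)) (hconv : Convex ℝ D)
    (hdom : IsClosedDomain D) (f : (Fin d → ℝ) → ℝ) (hf : ContinuousOn f D)
    (hpl : IsPLOn D f) :
    ∃ p q : (Fin d → ℝ) → ℝ, IsPLOn D p ∧ IsPLOn D q ∧
      ConcaveOn ℝ D p ∧ ConcaveOn ℝ D q ∧ ∀ x ∈ D, f x = p x - q x := by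
  classical
  obtain ⟨𝒟, hdoms, hcover, haff⟩ := hpl
  choose U hUne hUopen hUP using fun P : {P // P ∈ 𝒟} => hdoms P.1 P.2
  choose G hG using fun P : {P // P ∈ 𝒟} => haff P.1 P.2
  set L : List ((Fin d → ℝ) →ᵃ[ℝ] ℝ) := 𝒟.attach.toList.map G with hL
  set n := L.length with hn
  set g : Fin n → ((Fin d → ℝ) →ᵃ[ℝ] ℝ) := fun i => L.get i with hg
  have hPD : ∀ P ∈ 𝒟, P ⊆ D := by
    intro P hP
    rw [← hcover]
    exact Set.subset_biUnion_of_mem (u := fun P => P) hP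
  have hgsel : ∀ x ∈ D, ∃ i : Fin n, f x = g i x := by
    intro x hx
    rw [← hcover] at hx
    obtain ⟨P, hP, hxP⟩ := Set.mem_iUnion₂.1 hx
    have hmem : G ⟨P, hP⟩ ∈ L :=
      List.mem_map.2 ⟨⟨P, hP⟩, Finset.mem_toList.2 (Finset.mem_attach _ _), rfl⟩
    obtain ⟨k, hk⟩ := List.get_of_mem hmem
    refine ⟨k, ?_⟩
    show f x = (L.get k) x
    rw [hk]
    exact hG ⟨P, hP⟩ x hxP
  set hm : Fin n × Fin n → ((Fin d → ℝ) →ᵃ[ℝ] ℝ) := fun pr => g pr.1 - g pr.2 with hhm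
  have hm_apply : ∀ (pr : Fin n × Fin n) (x : Fin d → ℝ), hm pr x = g pr.1 x - g pr.2 x := by
    intro pr x
    rw [show hm pr = g pr.1 - g pr.2 from rfl, AffineMap.coe_sub, Pi.sub_apply]
  set S : (Fin d → ℝ) → ℝ := fun x => ∑ pr : Fin n × Fin n, |hm pr x| with hS
  have hSc : Continuous S :=
    continuous_finset_sum _ fun pr _ => (affine_cont (hm pr)).abs
  set p : (Fin d → ℝ) → ℝ := fun x => f x - S x with hp
  set q : (Fin d → ℝ) → ℝ := fun x => -S x with hq
  -- ## Convexity of S, concavity of q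
  have hSconv : ConvexOn ℝ D S := by
    refine convexOn_finset_sum hconv _ _ fun pr _ => ?_
    exact convexOn_abs_affine hconv (hm pr)
  have hqconc : ConcaveOn ℝ D q := by
    have := hSconv.neg
    exact concaveOn_congr this fun x _ => rfl
  -- ## Concavity of p via the one-dimensional lemma
  have hpconc : ConcaveOn ℝ D p := by
    refine ⟨hconv, ?_⟩
    intro x hx y hy α β hα hβ hαβ
    set Lm : ℝ → (Fin d → ℝ) := fun t => x + t • (y - x) with hLm
    have hLmem : ∀ t ∈ Set.Icc (0:ℝ) 1, Lm t ∈ D := by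
      intro t ht
      have h1 := hconv hx hy (by linarith [ht.2] : (0:ℝ) ≤ 1 - t) ht.1 (by ring)
      have h2 : (1 - t) • x + t • y = Lm t := by
        simp only [hLm]; simp only [sub_smul, one_smul, smul_sub]; abel
      rwa [h2] at h1
    set a : Fin n → ℝ := fun i => (g i).linear (y - x) with ha
    set b : Fin n → ℝ := fun i => g i x with hb
    have heval : ∀ (i : Fin n) (t : ℝ), g i (Lm t) = a i * t + b i := by
      intro i t
      have h2 : Lm t = t • (y - x) +ᵥ x := by rw [vadd_eq_add, hLm]; abel
      rw [h2, AffineMap.map_vadd, vadd_eq_add, LinearMap.map_smul, smul_eq_mul]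
      rw [ha, hb]; ring
    set φ : ℝ → ℝ := fun t => f (Lm t) with hφdef
    have hLcont : Continuous Lm := by
      simp only [hLm]; exact continuous_const.add (continuous_id.smul continuous_const)
    have hφcont : ContinuousOn φ (Set.Icc 0 1) :=
      hf.comp hLcont.continuousOn hLmem
    have hsel1 : ∀ t ∈ Set.Icc (0:ℝ) 1, ∃ i, φ t = a i * t + b i := by
      intro t ht
      obtain ⟨i, hi⟩ := hgsel (Lm t) (hLmem t ht)
      exact ⟨i, by rw [hφdef]; simp only; rw [hi, heval]⟩
    have hpsi : ∀ t ∈ Set.Icc (0:ℝ) 1, psiFun a b φ t = p (Lm t) := by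
      intro t _
      rw [psiFun]; simp only [hp]
      congr 1
      refine Finset.sum_congr rfl fun pr _ => ?_
      rw [hm_apply, heval, heval]
      ring_nf
    have hβIcc : β ∈ Set.Icc (0:ℝ) 1 := ⟨hβ, by linarith⟩
    have h0Icc : (0:ℝ) ∈ Set.Icc (0:ℝ) 1 := by constructor <;> norm_num
    have h1Icc : (1:ℝ) ∈ Set.Icc (0:ℝ) 1 := by constructor <;> norm_num
    have hkey := oneD a b hφcont hsel1 β hβIcc
    rw [hpsi β hβIcc, hpsi 0 h0Icc, hpsi 1 h1Icc] at hkey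
    have hL0 : Lm 0 = x := by simp only [hLm]; simp
    have hL1 : Lm 1 = y := by simp only [hLm]; simp
    have hLβ : Lm β = α • x + β • y := by
      simp only [hLm]
      have hα' : α = 1 - β := by linarith
      rw [hα', sub_smul, one_smul, smul_sub]; abel
    rw [hL0, hL1, hLβ] at hkey
    have hα' : α = 1 - β := by linarith
    calc α • p x + β • p y = (1 - β) * p x + β * p y := by
          rw [hα', smul_eq_mul, smul_eq_mul]
      _ ≤ p (α • x + β • y) := hkey
  -- ## Piecewise linearity
  set ZF : Fin n × Fin n → Set (Fin d → ℝ) :=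
    fun pr => if hm pr = 0 then ∅ else {x | hm pr x = 0} with hZF
  have hZc : ∀ pr, IsClosed (ZF pr) := by
    intro pr
    simp only [hZF]
    split
    · exact isClosed_empty
    · exact isClosed_eq (affine_cont (hm pr)) continuous_const
  have hZe : ∀ pr, interior (ZF pr) = ∅ := by
    intro pr
    simp only [hZF]
    split
    · simp
    · exact affine_zero_interior (hm pr) (by assumption)
  set Z : Set (Fin d → ℝ) := ⋃ pr ∈ (Finset.univ : Finset (Fin n × Fin n)), ZF pr with hZ
  have hZmeager : ∀ O : Set (Fin d → ℝ), IsOpen O → O ⊆ Z → O = ∅ :=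
    open_subset_finite_union_empty Finset.univ ZF hZc hZe
  set B : ((Fin n × Fin n) → Bool) → (Fin n × Fin n) → Set (Fin d → ℝ) :=
    fun σ pr => if hm pr = 0 then Set.univ
      else (if σ pr then {x | 0 < hm pr x} else {x | hm pr x < 0}) with hB
  set O : ((Fin n × Fin n) → Bool) → Set (Fin d → ℝ) :=
    fun σ => ⋂ pr : Fin n × Fin n, B σ pr with hO
  have hOopen : ∀ σ, IsOpen (O σ) := by
    intro σ
    refine isOpen_iInter_of_finite fun pr => ?_
    simp only [hB]
    split
    · exact isOpen_univ
    · split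
      · exact isOpen_lt continuous_const (affine_cont (hm pr))
      · exact isOpen_lt (affine_cont (hm pr)) continuous_const
  have hOassign : ∀ y : Fin d → ℝ, y ∉ Z → y ∈ O (fun pr => decide (0 < hm pr y)) := by
    intro y hy
    simp only [hO]
    refine Set.mem_iInter.2 fun pr => ?_
    simp only [hB]
    split
    · exact Set.mem_univ _
    · rename_i hzero
      have hyne : hm pr y ≠ 0 := by
        intro h0
        apply hy
        simp only [hZ]
        refine Set.mem_biUnion (Finset.mem_univ pr) ?_
        simp only [hZF]
        simp only [if_neg hzero]
        exact h0
      by_cases hpos : 0 < hm pr y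
      · simp only [decide_eq_true_eq]
        rw [if_pos hpos]
        exact hpos
      · have hneg : hm pr y < 0 := lt_of_le_of_ne (not_lt.1 hpos) hyne
        simp only [decide_eq_true_eq]
        rw [if_neg hpos]
        exact hneg
  -- the affine expression for S on a cell
  set e : ((Fin n × Fin n) → Bool) → (Fin n × Fin n) → ((Fin d → ℝ) →ᵃ[ℝ] ℝ) :=
    fun σ pr => if hm pr = 0 then 0 else (if σ pr then hm pr else -(hm pr)) with he
  have hSaff : ∀ σ, ∀ x ∈ O σ, S x = (∑ pr : Fin n × Fin n, e σ pr) x := by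
    intro σ x hxO
    rw [affine_sum_apply, hS]
    refine Finset.sum_congr rfl fun pr _ => ?_
    have hxB : x ∈ B σ pr := by
      simp only [hO] at hxO
      exact Set.mem_iInter.1 hxO pr
    simp only [he]
    simp only [hB] at hxB
    by_cases hzero : hm pr = 0
    · simp only [if_pos hzero, hzero]
      simp
    · simp only [if_neg hzero] at hxB ⊢
      by_cases hσ : σ pr
      · simp only [if_pos hσ] at hxB ⊢
        exact abs_of_pos hxB
      · simp only [if_neg hσ] at hxB ⊢
        rw [abs_of_neg hxB, AffineMap.coe_neg, Pi.neg_apply]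
  -- the pieces
  set pieces : Finset (Set (Fin d → ℝ)) :=
    Finset.image (fun z : {P // P ∈ 𝒟} × ((Fin n × Fin n) → Bool) =>
        closure (U z.1 ∩ O z.2))
      (Finset.univ.filter fun z : {P // P ∈ 𝒟} × ((Fin n × Fin n) → Bool) =>
        (U z.1 ∩ O z.2).Nonempty) with hpieces
  have hmem_pieces : ∀ Q ∈ pieces, ∃ z : {P // P ∈ 𝒟} × ((Fin n × Fin n) → Bool),
      (U z.1 ∩ O z.2).Nonempty ∧ Q = closure (U z.1 ∩ O z.2) := by
    intro Q hQ
    rw [hpieces] at hQ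
    obtain ⟨z, hz, hQeq⟩ := Finset.mem_image.1 hQ
    exact ⟨z, (Finset.mem_filter.1 hz).2, hQeq.symm⟩
  have hpieces_dom : ∀ Q ∈ pieces, IsClosedDomain Q := by
    intro Q hQ
    obtain ⟨z, hne, hQeq⟩ := hmem_pieces Q hQ
    exact ⟨U z.1 ∩ O z.2, hne, (hUopen z.1).inter (hOopen z.2), hQeq⟩
  have hQsubD : ∀ z : {P // P ∈ 𝒟} × ((Fin n × Fin n) → Bool),
      closure (U z.1 ∩ O z.2) ⊆ D := by
    intro z
    refine (closure_mono Set.inter_subset_left).trans ?_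
    rw [← hUP z.1]
    exact hPD z.1.1 z.1.2
  have hpieces_cover : (⋃ Q ∈ pieces, Q) = D := by
    apply subset_antisymm
    · refine Set.iUnion₂_subset fun Q hQ => ?_
      obtain ⟨z, _, hQeq⟩ := hmem_pieces Q hQ
      rw [hQeq]
      exact hQsubD z
    · intro x hx
      rw [← hcover] at hx
      obtain ⟨P, hP, hxP⟩ := Set.mem_iUnion₂.1 hx
      have hxcl : x ∈ closure (U ⟨P, hP⟩) := by
        rw [← hUP ⟨P, hP⟩]; exact hxP
      have hx2 : x ∈ closure (U ⟨P, hP⟩ \ Z) :=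
        mem_closure_diff_of_meager hZmeager (hUopen ⟨P, hP⟩) x hxcl
      have hsub : U ⟨P, hP⟩ \ Z ⊆
          ⋃ σ ∈ (Finset.univ : Finset ((Fin n × Fin n) → Bool)), (U ⟨P, hP⟩ ∩ O σ) := by
        intro y hy
        refine Set.mem_biUnion (Finset.mem_univ (fun pr => decide (0 < hm pr y))) ?_
        exact ⟨hy.1, hOassign y hy.2⟩
      have hx3 : x ∈ closure (⋃ σ ∈ (Finset.univ : Finset ((Fin n × Fin n) → Bool)),
          (U ⟨P, hP⟩ ∩ O σ)) := closure_mono hsub hx2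
      rw [Finset.closure_biUnion] at hx3
      obtain ⟨σ, _, hxσ⟩ := Set.mem_iUnion₂.1 hx3
      have hneσ : (U ⟨P, hP⟩ ∩ O σ).Nonempty := by
        rcases Set.eq_empty_or_nonempty (U ⟨P, hP⟩ ∩ O σ) with h | h
        · rw [h] at hxσ; simp at hxσ
        · exact h
      refine Set.mem_biUnion ?_ hxσ
      rw [hpieces]
      refine Finset.mem_image.2 ⟨(⟨P, hP⟩, σ), Finset.mem_filter.2 ⟨Finset.mem_univ _, hneσ⟩, rfl⟩
  have hpieces_aff_q : ∀ Q ∈ pieces, ∃ A : (Fin d → ℝ) →ᵃ[ℝ] ℝ, ∀ x ∈ Q, q x = A x := by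
    intro Q hQ
    obtain ⟨z, _, hQeq⟩ := hmem_pieces Q hQ
    refine ⟨-(∑ pr : Fin n × Fin n, e z.2 pr), ?_⟩
    have hEq : Set.EqOn q (fun x => (-(∑ pr : Fin n × Fin n, e z.2 pr) : _ →ᵃ[ℝ] ℝ) x)
        (U z.1 ∩ O z.2) := by
      intro x hxz
      simp only [AffineMap.coe_neg, Pi.neg_apply]
      simp only [hq]
      simp only [neg_inj]
      exact hSaff z.2 x hxz.2
    have := eqOn_closure_of_continuousOn (D := D)
      (hSc.neg.continuousOn : ContinuousOn q D)
      (affine_cont _).neg (hQsubD z) hEq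
    intro x hxQ
    rw [hQeq] at hxQ
    exact this hxQ
  have hpieces_aff_p : ∀ Q ∈ pieces, ∃ A : (Fin d → ℝ) →ᵃ[ℝ] ℝ, ∀ x ∈ Q, p x = A x := by
    intro Q hQ
    obtain ⟨z, _, hQeq⟩ := hmem_pieces Q hQ
    refine ⟨G z.1 - (∑ pr : Fin n × Fin n, e z.2 pr), ?_⟩
    have hEq : Set.EqOn p
        (fun x => (G z.1 - (∑ pr : Fin n × Fin n, e z.2 pr) : _ →ᵃ[ℝ] ℝ) x)
        (U z.1 ∩ O z.2) := by
      intro x hxz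
      simp only [AffineMap.coe_sub, Pi.sub_apply]
      simp only [hp]
      have hfx : f x = G z.1 x := by
        refine hG z.1 x ?_
        rw [hUP z.1]
        exact subset_closure hxz.1
      rw [hfx, hSaff z.2 x hxz.2]
    have hpc : ContinuousOn p D := hf.sub hSc.continuousOn
    have := eqOn_closure_of_continuousOn (D := D) hpc
      ((affine_cont _).sub (affine_cont _)) (hQsubD z) hEq
    intro x hxQ
    rw [hQeq] at hxQ
    exact this hxQ
  exact ⟨p, q, ⟨pieces, hpieces_dom, hpieces_cover, hpieces_aff_p⟩,
    ⟨pieces, hpieces_dom, hpieces_cover, hpieces_aff_q⟩,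
    hpconc, hqconc, fun x _ => by rw [hp, hq]; ring⟩

end Main
end

section
/- Let X be a linear order that is connected in its interval (order) topology. Then each chamber O_α = {(x_1,...,x_d) ∈ X^d : x_{α(1)} < x_{α(2)} < ⋯ < x_{α(d)}} is a connected subset of X^d with the product topology. -/
open Set

section Aux

variable {X : Type*} [LinearOrder X] [TopologicalSpace X] [OrderTopology X] [ConnectedSpace X]

lemma myExistsIsLUB {s : Set X} (hne : s.Nonempty) (hb : BddAbove s) : ∃ x, IsLUB s x := by
  by_contra h
  push_neg at h
  set U := upperBounds s with hU
  have hUopen : IsOpen U := by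
    rw [isOpen_iff_forall_mem_open]
    intro x hx
    have : ¬ (∀ y ∈ U, x ≤ y) := fun hy => h x ⟨hx, hy⟩
    push_neg at this
    obtain ⟨y, hyU, hyx⟩ := this
    exact ⟨Ioi y, fun w hw => fun z hz => le_of_lt (lt_of_le_of_lt (hyU hz) hw),
      isOpen_Ioi, hyx⟩
  have hUcopen : IsOpen Uᶜ := by
    rw [isOpen_iff_forall_mem_open]
    intro x hx
    have : ¬ ∀ z ∈ s, z ≤ x := hx
    push_neg at this
    obtain ⟨z, hzs, hxz⟩ := this
    exact ⟨Iio z, fun w hw hws => absurd (hws hzs) (not_le.2 hw), isOpen_Iio, hxz⟩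
  have hUne : U.Nonempty := hb
  have hUcne : Uᶜ.Nonempty := by
    by_contra hc
    rw [not_nonempty_iff_eq_empty, compl_empty_iff] at hc
    obtain ⟨z, hz⟩ := hne
    have hzU : z ∈ U := by rw [hc]; trivial
    exact h z ⟨hzU, fun y hy => hy hz⟩
  have := isPreconnected_univ (u := U) (v := Uᶜ) hUopen hUcopen
    (by intro x _; exact (em (x ∈ U)).imp id id)
    (by obtain ⟨x, hx⟩ := hUne; exact ⟨x, mem_univ x, hx⟩)
    (by obtain ⟨x, hx⟩ := hUcne; exact ⟨x, mem_univ x, hx⟩)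
  obtain ⟨x, -, hx1, hx2⟩ := this
  exact hx2 hx1

lemma myDense : DenselyOrdered X := by
  constructor
  intro a b hab
  by_contra h
  push_neg at h
  have hio : Ioo a b = ∅ := eq_empty_iff_forall_notMem.2 fun c hc => absurd (h c hc.1) (not_le.2 hc.2)
  have := isPreconnected_univ (u := Iio b) (v := Ioi a) isOpen_Iio isOpen_Ioi
    (by intro x _; rcases lt_or_ge x b with h'|h'
        · exact Or.inl h'
        · exact Or.inr (lt_of_lt_of_le hab h'))
    ⟨a, mem_univ a, hab⟩ ⟨b, mem_univ b, hab⟩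
  obtain ⟨x, -, hx1, hx2⟩ := this
  have : x ∈ Ioo a b := ⟨hx2, hx1⟩
  rw [hio] at this
  exact this

lemma myIccPreconnected [Nontrivial X] (a b : X) : IsPreconnected (Set.Icc a b) := by
  classical
  haveI : Nonempty X := inferInstance
  haveI hd : DenselyOrdered X := myDense
  haveI : ConnectedSpace Xᵒᵈ := ‹ConnectedSpace X›
  have hglb : ∀ s : Set X, s.Nonempty → BddBelow s → ∃ x, IsGLB s x := by
    intro s hne hb
    obtain ⟨x, hx⟩ := myExistsIsLUB (X := Xᵒᵈ) (s := OrderDual.ofDual ⁻¹' s) hne hb.dual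
    exact ⟨OrderDual.ofDual x, hx⟩
  letI : SupSet X := ⟨fun s => if h : s.Nonempty ∧ ∃ x, IsLUB s x then h.2.choose
    else Classical.arbitrary X⟩
  letI : InfSet X := ⟨fun s => if h : s.Nonempty ∧ ∃ x, IsGLB s x then h.2.choose
    else Classical.arbitrary X⟩
  letI C : ConditionallyCompleteLinearOrder X :=
    { (inferInstance : Lattice X), (inferInstance : LinearOrder X),
      (inferInstance : SupSet X), (inferInstance : InfSet X) with
      isLUB_csSup := by
        intro s hne hb
        have h : s.Nonempty ∧ ∃ y, IsLUB s y := ⟨hne, myExistsIsLUB hne hb⟩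
        show IsLUB s (dite _ _ _)
        rw [dif_pos h]
        exact h.2.choose_spec
      isGLB_csInf := by
        intro s hne hb
        have h : s.Nonempty ∧ ∃ y, IsGLB s y := ⟨hne, hglb s hne hb⟩
        show IsGLB s (dite _ _ _)
        rw [dif_pos h]
        exact h.2.choose_spec
      csSup_of_not_bddAbove := by
        intro s hs
        show dite _ _ _ = dite _ _ _
        rw [dif_neg, dif_neg]
        · rintro ⟨⟨x, hx⟩, -⟩; exact hx
        · rintro ⟨hne, x, hx⟩; exact hs ⟨x, hx.1⟩
      csInf_of_not_bddBelow := by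
        intro s hs
        show dite _ _ _ = dite _ _ _
        rw [dif_neg, dif_neg]
        · rintro ⟨⟨x, hx⟩, -⟩; exact hx
        · rintro ⟨hne, x, hx⟩; exact hs ⟨x, hx.1⟩ }
  exact isPreconnected_Icc

end Aux

section Main

variable {X : Type*} [LinearOrder X] [TopologicalSpace X] [OrderTopology X] [ConnectedSpace X]
  [Nontrivial X] {d : ℕ}

set_option linter.unusedSectionVars false in
lemma z_strictMono {x m : Fin d → X} (hx : StrictMono x) (hm : StrictMono m)
    (hle : ∀ i, m i ≤ x i) (k : ℕ) :
    StrictMono (fun i : Fin d => if (i : ℕ) < k then m i else x i) := by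
  intro i j hij
  dsimp only
  by_cases hi : (i : ℕ) < k <;> by_cases hj : (j : ℕ) < k
  · rw [if_pos hi, if_pos hj]; exact hm hij
  · rw [if_pos hi, if_neg hj]; exact lt_of_lt_of_le (hm hij) (hle j)
  · exact absurd (lt_trans (Fin.lt_iff_val_lt_val.1 hij) hj) hi
  · rw [if_neg hi, if_neg hj]; exact hx hij

lemma connect_down (x m : Fin d → X) (hx : StrictMono x) (hm : StrictMono m)
    (hle : ∀ i, m i ≤ x i) :
    ∃ t, t ⊆ {y : Fin d → X | StrictMono y} ∧ IsPreconnected t ∧ x ∈ t ∧ m ∈ t := by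
  classical
  set S := {y : Fin d → X | StrictMono y} with hS
  set z : ℕ → Fin d → X := fun k i => if (i : ℕ) < k then m i else x i with hz
  have key : ∀ k : ℕ, ∃ t, t ⊆ S ∧ IsPreconnected t ∧ x ∈ t ∧ z k ∈ t := by
    intro k
    induction k with
    | zero =>
      refine ⟨{x}, ?_, isPreconnected_singleton, rfl, ?_⟩
      · rintro y rfl; exact hx
      · have : z 0 = x := by
          funext i; simp [hz]
        rw [this]; rfl
    | succ k ih =>
      obtain ⟨t, htS, htc, hxt, hzt⟩ := ih
      by_cases hk : k < d
      · set K : Fin d := ⟨k, hk⟩ with hK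
        set seg := (fun c => Function.update (z k) K c) '' Set.Icc (m K) (x K) with hseg
        have hsegS : seg ⊆ S := by
          rintro w ⟨c, hc, rfl⟩
          intro i j hij
          show Function.update (z k) K c i < Function.update (z k) K c j
          rcases eq_or_ne i K with rfl | hiK
          · rw [Function.update_self]
            have hjK : j ≠ K := ne_of_gt hij
            rw [Function.update_of_ne hjK]
            have hjk : ¬ (j : ℕ) < k := by
              have h1 : (K : ℕ) < (j : ℕ) := hij
              have h2 : (K : ℕ) = k := rfl
              omega
            show c < z k j
            rw [hz]; dsimp only; rw [if_neg hjk]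
            exact lt_of_le_of_lt hc.2 (hx hij)
          · rw [Function.update_of_ne hiK]
            rcases eq_or_ne j K with rfl | hjK
            · rw [Function.update_self]
              have hik : (i : ℕ) < k := hij
              show z k i < c
              rw [hz]; dsimp only; rw [if_pos hik]
              exact lt_of_lt_of_le (hm hij) hc.1
            · rw [Function.update_of_ne hjK]
              exact z_strictMono hx hm hle k hij
        have hsegP : IsPreconnected seg := by
          apply (myIccPreconnected (m K) (x K)).image
          exact ((continuous_update K).comp (Continuous.prodMk_right (z k))).continuousOn
        have hzk_mem : z k ∈ seg := by
          refine ⟨x K, ⟨hle K, le_refl _⟩, ?_⟩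
          show Function.update (z k) K (x K) = z k
          have : z k K = x K := by rw [hz]; dsimp only; rw [if_neg (lt_irrefl k)]
          rw [← this, Function.update_eq_self]
        have hzk1_mem : z (k + 1) ∈ seg := by
          refine ⟨m K, ⟨le_refl _, hle K⟩, ?_⟩
          show Function.update (z k) K (m K) = z (k + 1)
          funext i
          rcases eq_or_ne i K with rfl | hiK
          · rw [Function.update_self, hz]
            dsimp only
            rw [if_pos (Nat.lt_succ_self k)]
          · rw [Function.update_of_ne hiK, hz]
            dsimp only
            have : (i : ℕ) ≠ k := fun h => hiK (Fin.ext h)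
            by_cases hik : (i : ℕ) < k
            · rw [if_pos hik, if_pos (Nat.lt_succ_of_lt hik)]
            · rw [if_neg hik, if_neg (by omega)]
        refine ⟨t ∪ seg, Set.union_subset htS hsegS,
          IsPreconnected.union (z k) hzt hzk_mem htc hsegP,
          Or.inl hxt, Or.inr hzk1_mem⟩
      · have : z (k + 1) = z k := by
          funext i
          have hik : (i : ℕ) < k := lt_of_lt_of_le i.isLt (le_of_not_gt hk)
          rw [hz]; dsimp only
          rw [if_pos hik, if_pos (Nat.lt_succ_of_lt hik)]
        rw [this]
        exact ⟨t, htS, htc, hxt, hzt⟩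
  obtain ⟨t, htS, htc, hxt, hzt⟩ := key d
  have : z d = m := by
    funext i
    rw [hz]; dsimp only
    rw [if_pos i.isLt]
  rw [this] at hzt
  exact ⟨t, htS, htc, hxt, hzt⟩

lemma strictMonoSet_isConnected :
    IsConnected {y : Fin d → X | StrictMono y} := by
  haveI hd : DenselyOrdered X := myDense
  constructor
  · -- Nonempty
    obtain ⟨a, b, hab⟩ := exists_pair_lt X
    haveI := Set.Ioo.infinite hab
    haveI : Infinite X :=
      Infinite.of_injective (fun x : Set.Ioo a b => (x : X)) Subtype.coe_injective
    classical
    set f := Infinite.natEmbedding X with hf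
    set s : Finset X := Finset.image (fun i : Fin d => f i) Finset.univ with hs
    have hcard : s.card = d := by
      rw [hs, Finset.card_image_of_injective _ (fun i j hij => Fin.ext
        (by exact_mod_cast f.injective hij)), Finset.card_univ, Fintype.card_fin]
    refine ⟨fun i => (s.orderIsoOfFin hcard i : X), fun i j hij => ?_⟩
    exact_mod_cast (s.orderIsoOfFin hcard).strictMono hij
  · -- Preconnected
    apply isPreconnected_of_forall_pair
    intro x hx y hy
    set m : Fin d → X := fun i => min (x i) (y i) with hm
    have hmS : StrictMono m := by
      intro i j hij
      exact lt_min (min_le_left _ _ |>.trans_lt (hx hij)) (min_le_right _ _ |>.trans_lt (hy hij))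
    obtain ⟨t1, ht1S, ht1c, hxt1, hmt1⟩ := connect_down x m hx hmS (fun i => min_le_left _ _)
    obtain ⟨t2, ht2S, ht2c, hyt2, hmt2⟩ := connect_down y m hy hmS (fun i => min_le_right _ _)
    exact ⟨t1 ∪ t2, Set.union_subset ht1S ht2S, Or.inl hxt1, Or.inr hyt2,
      IsPreconnected.union m hmt1 hmt2 ht1c ht2c⟩

end Main

/-- In the `d`-th power of a linear order `X` connected in its order topology,
each chamber `O_α = {x : x_{α(1)} < ⋯ < x_{α(d)}}` is a connected set. -/
theorem chamber_isConnected (X : Type*) [LinearOrder X] [TopologicalSpace X]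
    [OrderTopology X] [ConnectedSpace X] [Nontrivial X]
    (d : ℕ) (α : Equiv.Perm (Fin d)) :
    IsConnected {x : Fin d → X | StrictMono fun i => x (α i)} := by
  have hg : Continuous (fun (y : Fin d → X) (j : Fin d) => y (α.symm j)) :=
    continuous_pi fun j => continuous_apply _
  have himg : {x : Fin d → X | StrictMono fun i => x (α i)} =
      (fun (y : Fin d → X) (j : Fin d) => y (α.symm j)) '' {y : Fin d → X | StrictMono y} := by
    ext x
    constructor
    · intro hx
      refine ⟨fun i => x (α i), hx, ?_⟩
      funext j
      simp
    · rintro ⟨y, hy, rfl⟩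
      have : (fun i => (fun j => y (α.symm j)) (α i)) = y := by
        funext i; simp
      show StrictMono fun i => (fun j => y (α.symm j)) (α i)
      rw [this]
      exact hy
  rw [himg]
  exact strictMonoSet_isConnected.image _ hg.continuousOn
end

section
/- Let X be a linear order without gaps (every nonempty open interval (a,b) with a < b is nonempty). Then each chamber O_α ⊆ X^d is open, and the union of all chambers is dense in X^d. -/
lemma exists_injective_mem_of_infinite {X : Type*} :
    ∀ (d : ℕ) (u : Fin d → Set X), (∀ i, (u i).Infinite) →
      ∃ y : Fin d → X, Function.Injective y ∧ ∀ i, y i ∈ u i := by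
  intro d
  induction d with
  | zero => exact fun u _ => ⟨Fin.elim0, fun i => i.elim0, fun i => i.elim0⟩
  | succ n ih =>
    intro u hu
    obtain ⟨y', hy'inj, hy'mem⟩ := ih (fun i => u i.succ) (fun i => hu i.succ)
    obtain ⟨y0, hy0⟩ := ((hu 0).diff (Set.finite_range y')).nonempty
    refine ⟨Fin.cons y0 y', ?_, ?_⟩
    · rw [Fin.cons_injective_iff]
      exact ⟨hy0.2, hy'inj⟩
    · intro i
      refine Fin.cases ?_ ?_ i
      · exact hy0.1
      · exact fun j => hy'mem j

/-- For a linear order `X` without gaps (i.e. densely ordered), every chamber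
`O_α ⊆ X^d` is open and the union of all chambers is dense in `X^d`. -/
theorem chambers_open_and_union_dense (X : Type*) [LinearOrder X] [TopologicalSpace X]
    [OrderTopology X] [DenselyOrdered X] [Nontrivial X] (d : ℕ) :
    (∀ α : Equiv.Perm (Fin d), IsOpen {x : Fin d → X | StrictMono fun i => x (α i)}) ∧
    Dense (⋃ α : Equiv.Perm (Fin d), {x : Fin d → X | StrictMono fun i => x (α i)}) := by
  constructor
  · intro α
    have : {x : Fin d → X | StrictMono fun i => x (α i)} =
        ⋂ (p : Fin d × Fin d) (_ : p.1 < p.2), {x : Fin d → X | x (α p.1) < x (α p.2)} := by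
      ext x
      simp only [Set.mem_setOf_eq, Set.mem_iInter]
      exact ⟨fun h p hp => h hp, fun h i j hij => h (i, j) hij⟩
    rw [this]
    refine isOpen_iInter_of_finite fun p => isOpen_iInter_of_finite fun _ => ?_
    exact isOpen_lt (continuous_apply _) (continuous_apply _)
  · rw [dense_iff_inter_open]
    intro U hU ⟨x, hx⟩
    obtain ⟨I, u, hui, hsub⟩ := isOpen_pi_iff.mp hU x hx
    set u' : Fin d → Set X := fun i => if i ∈ I then u i else Set.univ with hu'
    have hinf : ∀ i, (u' i).Infinite := by
      intro i
      refine infinite_of_mem_nhds (x i) ?_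
      by_cases h : i ∈ I
      · simp only [hu', if_pos h]
        exact (hui i h).1.mem_nhds (hui i h).2
      · simp only [hu', if_neg h]
        exact Filter.univ_mem
    obtain ⟨y, hyinj, hymem⟩ := exists_injective_mem_of_infinite d u' hinf
    refine ⟨y, ?_, ?_⟩
    · apply hsub
      intro i hi
      have := hymem i
      simp only [hu'] at this
      rwa [if_pos (Finset.mem_coe.mp hi)] at this
    · refine Set.mem_iUnion.mpr ⟨Tuple.sort y, ?_⟩
      exact (Tuple.monotone_sort y).strictMono_of_injective
        (hyinj.comp (Tuple.sort y).injective)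
end

section
/- Let X be a connected linear order (in its order topology). A function f : X^d → X is a continuous coordinate selector (for every x there is i with f(x) = x_i) if and only if f is a lattice polynomial in the coordinates, i.e., f(x) = ⋁_{i∈I} ⋀_{j∈K_i} x_j for some family {K_i}_{i∈I} of nonempty subsets of {1,...,d}. -/
open Finset Set

set_option linter.unusedSectionVars false

section SelectorAux

variable {X : Type*} [LinearOrder X] [TopologicalSpace X] [OrderTopology X]
  [ConnectedSpace X] {d : ℕ} {f : (Fin d → X) → X}




private lemma exists_between_conn {a b : X} (h : a < b) : ∃ c, a < c ∧ c < b := by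
  have hcov : (Set.univ : Set X) ⊆ Iio b ∪ Ioi a := by
    intro x _
    rcases lt_or_ge x b with h1 | h1
    · exact Or.inl h1
    · exact Or.inr (lt_of_lt_of_le h h1)
  obtain ⟨c, -, hc1, hc2⟩ := isPreconnected_univ (Iio b) (Ioi a) isOpen_Iio isOpen_Ioi
    hcov ⟨a, trivial, h⟩ ⟨b, trivial, h⟩
  exact ⟨c, hc2, hc1⟩

private lemma exists_between_avoid (C : Finset X) :
    ∀ a b : X, a < b → ∃ v, a < v ∧ v < b ∧ v ∉ C := by
  induction C using Finset.strongInduction with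
  | _ C ih =>
    intro a b hab
    obtain ⟨v, h1, h2⟩ := exists_between_conn hab
    by_cases hv : v ∈ C
    · obtain ⟨w, hw1, hw2, hw3⟩ := ih (C.erase v) (Finset.erase_ssubset hv) a v h1
      exact ⟨w, hw1, hw2.trans h2, fun hw => hw3 (Finset.mem_erase.mpr ⟨hw2.ne, hw⟩)⟩
    · exact ⟨v, h1, h2, hv⟩

private lemma aux_sep {a b : X} {u v : Set X} (hu : IsOpen u) (hv : IsOpen v)
    (hcov : Icc a b ⊆ u ∪ v) {p q : X} (hp : p ∈ Icc a b) (hq : q ∈ Icc a b)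
    (hpu : p ∈ u) (hqv : q ∈ v) (hpq : p ≤ q)
    (hdisj : ¬(Icc a b ∩ (u ∩ v)).Nonempty) : False := by
  rcases eq_or_lt_of_le hpq with rfl | hlt
  · exact hdisj ⟨p, hp, hpu, hqv⟩
  set P : Set X := Iio q ∩ (u ∪ Iio p) with hP
  set Q : Set X := Ioi p ∩ (v ∪ Ioi q) with hQ
  have hcov2 : (Set.univ : Set X) ⊆ P ∪ Q := by
    intro x _
    rcases le_or_gt q x with h1 | h1
    · refine Or.inr ⟨hlt.trans_le h1, ?_⟩
      rcases eq_or_lt_of_le h1 with rfl | h2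
      · exact Or.inl hqv
      · exact Or.inr h2
    · rcases le_or_gt x p with h2 | h2
      · refine Or.inl ⟨h2.trans_lt hlt, ?_⟩
        rcases eq_or_lt_of_le h2 with rfl | h3
        · exact Or.inl hpu
        · exact Or.inr h3
      · have hxI : x ∈ Icc a b := ⟨hp.1.trans h2.le, h1.le.trans hq.2⟩
        rcases hcov hxI with h3 | h3
        · exact Or.inl ⟨h1, Or.inl h3⟩
        · exact Or.inr ⟨h2, Or.inl h3⟩
  obtain ⟨x, -, ⟨hx1, hx2⟩, ⟨hx3, hx4⟩⟩ := isPreconnected_univ P Q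
    (isOpen_Iio.inter (hu.union isOpen_Iio)) (isOpen_Ioi.inter (hv.union isOpen_Ioi))
    hcov2 ⟨p, trivial, hlt, Or.inl hpu⟩ ⟨q, trivial, hlt, Or.inl hqv⟩
  have hxu : x ∈ u := by
    rcases hx2 with h | h
    · exact h
    · exact absurd hx3 (not_lt.mpr h.le)
  have hxv : x ∈ v := by
    rcases hx4 with h | h
    · exact h
    · exact absurd hx1 (not_lt.mpr h.le)
  exact hdisj ⟨x, ⟨hp.1.trans hx3.le, hx1.le.trans hq.2⟩, hxu, hxv⟩

private lemma isPreconnected_Icc' (a b : X) : IsPreconnected (Icc a b) := by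
  rintro u v hu hv hcov ⟨p, hp, hpu⟩ ⟨q, hq, hqv⟩
  by_contra hdisj
  rcases le_total p q with h | h
  · exact aux_sep hu hv hcov hp hq hpu hqv h hdisj
  · exact aux_sep hv hu (fun x hx => (hcov hx).symm) hq hp hqv hpu h
      (fun ⟨x, h1, h2, h3⟩ => hdisj ⟨x, h1, h3, h2⟩)


private lemma const_eval (hsel : ∀ x : Fin d → X, ∃ i, f x = x i) (c : X) :
    f (fun _ => c) = c := by
  obtain ⟨i, hi⟩ := hsel _
  exact hi

private lemma mono_of_sel [Nonempty (Fin d)] (hf : Continuous f)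
    (hsel : ∀ x, ∃ i, f x = x i) : Monotone f := by
  intro x y hxy
  by_contra hlt
  push_neg at hlt
  have hzc : Continuous (fun t : X => fun j => y j ⊓ (x j ⊔ t)) := continuous_pi fun j =>
    continuous_const.min (continuous_const.max continuous_id)
  have hgc : Continuous (fun t : X => f (fun j => y j ⊓ (x j ⊔ t))) := hf.comp hzc
  set t₀ := Finset.univ.inf' Finset.univ_nonempty x with ht₀
  set t₁ := Finset.univ.sup' Finset.univ_nonempty y with ht₁
  have hzt₀ : (fun j => y j ⊓ (x j ⊔ t₀)) = x := funext fun j => by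
    have h1 : t₀ ≤ x j := Finset.inf'_le _ (Finset.mem_univ j)
    rw [sup_eq_left.mpr h1, inf_eq_right.mpr (hxy j)]
  have hzt₁ : (fun j => y j ⊓ (x j ⊔ t₁)) = y := funext fun j => by
    have h1 : y j ≤ t₁ := Finset.le_sup' _ (Finset.mem_univ j)
    rw [inf_eq_left.mpr (h1.trans le_sup_right)]
  have ht01 : t₀ ≤ t₁ := by
    obtain j := Classical.arbitrary (Fin d)
    exact (Finset.inf'_le _ (Finset.mem_univ j)).trans
      ((hxy j).trans (Finset.le_sup' _ (Finset.mem_univ j)))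
  have hval : ∀ t : X, ∀ k, y k ⊓ (x k ⊔ t) = y k ∨ y k ⊓ (x k ⊔ t) = x k
      ∨ y k ⊓ (x k ⊔ t) = t := by
    intro t k
    rcases le_total (y k) (x k ⊔ t) with h | h
    · exact Or.inl (inf_eq_left.mpr h)
    · rcases le_total t (x k) with h2 | h2
      · exact Or.inr (Or.inl (by rw [inf_eq_right.mpr h, sup_eq_left.mpr h2]))
      · exact Or.inr (Or.inr (by rw [inf_eq_right.mpr h, sup_eq_right.mpr h2]))
  set C : Finset X := Finset.univ.image x ∪ Finset.univ.image y with hC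
  have hxC : ∀ k, x k ∈ C := fun k =>
    Finset.mem_union_left _ (Finset.mem_image_of_mem x (Finset.mem_univ k))
  have hyC : ∀ k, y k ∈ C := fun k =>
    Finset.mem_union_right _ (Finset.mem_image_of_mem y (Finset.mem_univ k))
  obtain ⟨v, hv1, hv2, hv3⟩ := exists_between_avoid C _ _ hlt
  -- Step 1 : find t with f (z t) = v; necessarily t = v
  obtain ⟨t, htm, htv⟩ := (isPreconnected_Icc' t₀ t₁).intermediate_value₂
    (left_mem_Icc.mpr ht01) (right_mem_Icc.mpr ht01)
    (continuousOn_const (c := v)) hgc.continuousOn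
    (by show v ≤ f (fun j => y j ⊓ (x j ⊔ t₀)); rw [hzt₀]; exact hv2.le)
    (by show f (fun j => y j ⊓ (x j ⊔ t₁)) ≤ v; rw [hzt₁]; exact hv1.le)
  have htv' : f (fun j => y j ⊓ (x j ⊔ t)) = v := htv.symm
  obtain ⟨k, hk⟩ := hsel (fun j => y j ⊓ (x j ⊔ t))
  have hteq : t = v := by
    rcases hval t k with h | h | h
    · exact absurd (by rw [← htv', hk, h]; exact hyC k) hv3
    · exact absurd (by rw [← htv', hk, h]; exact hxC k) hv3
    · rw [← h, ← hk, htv']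
  have hgv : f (fun j => y j ⊓ (x j ⊔ v)) = v := hteq ▸ htv'
  -- Step 2
  obtain ⟨v', hv1', hv2', hv3'⟩ := exists_between_avoid C _ _ hv1
  have hvt₁ : v ≤ t₁ := hteq ▸ htm.2
  obtain ⟨t', htm', htv2⟩ := (isPreconnected_Icc' v t₁).intermediate_value₂
    (left_mem_Icc.mpr hvt₁) (right_mem_Icc.mpr hvt₁)
    (continuousOn_const (c := v')) hgc.continuousOn
    (by show v' ≤ f (fun j => y j ⊓ (x j ⊔ v)); rw [hgv]; exact hv2'.le)
    (by show f (fun j => y j ⊓ (x j ⊔ t₁)) ≤ v'; rw [hzt₁]; exact hv1'.le)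
  have htv2' : f (fun j => y j ⊓ (x j ⊔ t')) = v' := htv2.symm
  obtain ⟨k', hk'⟩ := hsel (fun j => y j ⊓ (x j ⊔ t'))
  rcases hval t' k' with h | h | h
  · exact hv3' (by rw [← htv2', hk', h]; exact hyC k')
  · exact hv3' (by rw [← htv2', hk', h]; exact hxC k')
  · have : v' = t' := by rw [← htv2', hk', h]
    exact absurd (this ▸ htm'.1) (not_le.mpr hv2')

private lemma cap_eval [Nonempty (Fin d)] (hf : Continuous f)
    (hsel : ∀ x, ∃ i, f x = x i) {x : Fin d → X} {c : X} (hc : c ≤ f x) :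
    f (fun j => x j ⊓ c) = c := by
  have hmono := mono_of_sel hf hsel
  set T := Finset.univ.sup' Finset.univ_nonempty x ⊔ c with hT
  have hcT : c ≤ T := le_sup_right
  have hgc : Continuous (fun t : X => f (fun j => x j ⊓ t)) :=
    hf.comp (continuous_pi fun j => continuous_const.min continuous_id)
  have hgT : f (fun j => x j ⊓ T) = f x := by
    congr 1
    funext j
    exact inf_eq_left.mpr ((Finset.le_sup' _ (Finset.mem_univ j)).trans le_sup_left)
  have hγle : f (fun j => x j ⊓ c) ≤ c := by
    calc f (fun j => x j ⊓ c) ≤ f (fun _ => c) := hmono (fun j => inf_le_right)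
    _ = c := const_eval hsel c
  rcases eq_or_lt_of_le hγle with h | h
  · exact h
  exfalso
  obtain ⟨v, hv1, hv2, hv3⟩ := exists_between_avoid (Finset.univ.image x) _ _ h
  obtain ⟨t, htm, htv⟩ := (isPreconnected_Icc' c T).intermediate_value₂
    (left_mem_Icc.mpr hcT) (right_mem_Icc.mpr hcT)
    hgc.continuousOn (continuousOn_const (c := v))
    (by show f (fun j => x j ⊓ c) ≤ v; exact hv1.le)
    (by show v ≤ f (fun j => x j ⊓ T); rw [hgT]; exact (hv2.trans_le hc).le)
  have htv' : f (fun j => x j ⊓ t) = v := htv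
  obtain ⟨k, hk⟩ := hsel (fun j => x j ⊓ t)
  have hgtk : v = x k ⊓ t := by rw [← htv', hk]
  rcases le_total (x k) t with h2 | h2
  · rw [inf_eq_left.mpr h2] at hgtk
    exact hv3 (by rw [hgtk]; exact Finset.mem_image_of_mem x (Finset.mem_univ k))
  · rw [inf_eq_right.mpr h2] at hgtk
    exact absurd (hgtk ▸ htm.1) (not_le.mpr hv2)


private lemma core_lemma [Nonempty (Fin d)] (hf : Continuous f)
    (hsel : ∀ x, ∃ i, f x = x i) (A : Finset (Fin d)) {s : X} {u u' : Fin d → X}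
    (huA : ∀ j ∈ A, u j = s) (hu'A : ∀ j ∈ A, u' j = s)
    (huo : ∀ j ∉ A, u j < s) (hu'o : ∀ j ∉ A, u' j < s)
    (hle : u' ≤ u) (hfu : f u = s) : f u' = s := by
  classical
  have hmono := mono_of_sel hf hsel
  have hus : ∀ j, u j ≤ s := fun j => by
    by_cases h : j ∈ A
    · exact (huA j h).le
    · exact (huo j h).le
  have hu's : ∀ j, u' j ≤ s := fun j => by
    by_cases h : j ∈ A
    · exact (hu'A j h).le
    · exact (hu'o j h).le
  have hγle : f u' ≤ s := hfu ▸ hmono hle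
  rcases eq_or_lt_of_le hγle with h | h
  · exact h
  exfalso
  -- choose v above f u' and all off-A coordinates of u, below s, avoiding coordinates
  set C : Finset X := Finset.univ.image u ∪ Finset.univ.image u' with hC
  have hB : ∃ B, f u' ≤ B ∧ B < s ∧ ∀ j ∉ A, u j ≤ B := by
    by_cases hAc : (Finset.univ.filter (fun j => j ∉ A)).Nonempty
    · refine ⟨f u' ⊔ (Finset.univ.filter (fun j => j ∉ A)).sup' hAc u, le_sup_left, ?_, ?_⟩
      · refine sup_lt_iff.mpr ⟨h, ?_⟩
        exact (Finset.sup'_lt_iff hAc).mpr fun j hj => huo j (Finset.mem_filter.mp hj).2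
      · intro j hj
        exact le_trans (Finset.le_sup' u (Finset.mem_filter.mpr ⟨Finset.mem_univ j, hj⟩))
          le_sup_right
    · exact ⟨f u', le_rfl, h, fun j hj =>
        absurd ⟨j, Finset.mem_filter.mpr ⟨Finset.mem_univ j, hj⟩⟩ hAc⟩
  obtain ⟨B, hB1, hB2, hB3⟩ := hB
  obtain ⟨v, hv1, hv2, hv3⟩ := exists_between_avoid C _ _ hB2
  have hvu' : f u' < v := lt_of_le_of_lt hB1 hv1
  have hvoff : ∀ j ∉ A, u j < v := fun j hj => lt_of_le_of_lt (hB3 j hj) hv1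
  -- path p t j = u j ⊓ (u' j ⊔ t)
  have hgc : Continuous (fun t : X => f (fun j => u j ⊓ (u' j ⊔ t))) :=
    hf.comp (continuous_pi fun j => continuous_const.min (continuous_const.max continuous_id))
  set t₀ := Finset.univ.inf' Finset.univ_nonempty u' with ht₀
  have hpt₀ : (fun j => u j ⊓ (u' j ⊔ t₀)) = u' := funext fun j => by
    rw [sup_eq_left.mpr (Finset.inf'_le _ (Finset.mem_univ j)), inf_eq_right.mpr (hle j)]
  have hps : (fun j => u j ⊓ (u' j ⊔ s)) = u := funext fun j => by
    rw [sup_eq_right.mpr (hu's j), inf_eq_left.mpr (hus j)]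
  have ht₀s : t₀ ≤ s := by
    obtain j := Classical.arbitrary (Fin d)
    exact (Finset.inf'_le _ (Finset.mem_univ j)).trans (hu's j)
  obtain ⟨t, htm, htv⟩ := (isPreconnected_Icc' t₀ s).intermediate_value₂
    (left_mem_Icc.mpr ht₀s) (right_mem_Icc.mpr ht₀s)
    hgc.continuousOn (continuousOn_const (c := v))
    (by show f (fun j => u j ⊓ (u' j ⊔ t₀)) ≤ v; rw [hpt₀]; exact hvu'.le)
    (by show v ≤ f (fun j => u j ⊓ (u' j ⊔ s)); rw [hps, hfu]; exact hv2.le)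
  have htv' : f (fun j => u j ⊓ (u' j ⊔ t)) = v := htv
  have hval : ∀ t : X, ∀ k, u k ⊓ (u' k ⊔ t) = u k ∨ u k ⊓ (u' k ⊔ t) = u' k
      ∨ u k ⊓ (u' k ⊔ t) = t := by
    intro t k
    rcases le_total (u k) (u' k ⊔ t) with h2 | h2
    · exact Or.inl (inf_eq_left.mpr h2)
    · rcases le_total t (u' k) with h3 | h3
      · exact Or.inr (Or.inl (by rw [inf_eq_right.mpr h2, sup_eq_left.mpr h3]))
      · exact Or.inr (Or.inr (by rw [inf_eq_right.mpr h2, sup_eq_right.mpr h3]))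
  have huC : ∀ k, u k ∈ C := fun k =>
    Finset.mem_union_left _ (Finset.mem_image_of_mem u (Finset.mem_univ k))
  have hu'C : ∀ k, u' k ∈ C := fun k =>
    Finset.mem_union_right _ (Finset.mem_image_of_mem u' (Finset.mem_univ k))
  obtain ⟨k, hk⟩ := hsel (fun j => u j ⊓ (u' j ⊔ t))
  have hteq : t = v := by
    rcases hval t k with h2 | h2 | h2
    · exact absurd (by rw [← htv', hk, h2]; exact huC k) hv3
    · exact absurd (by rw [← htv', hk, h2]; exact hu'C k) hv3
    · rw [← h2, ← hk, htv']
  subst hteq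
  -- now f (p v) = v, contradiction with the selector
  obtain ⟨k', hk'⟩ := hsel (fun j => u j ⊓ (u' j ⊔ t))
  have hkv : u k' ⊓ (u' k' ⊔ t) = t := by rw [← hk', htv']
  by_cases hkA : k' ∈ A
  · rw [huA k' hkA, hu'A k' hkA, sup_eq_left.mpr ((htm.2 : t ≤ s)), inf_idem] at hkv
    exact absurd hkv.symm (ne_of_lt hv2)
  · have : u k' ⊓ (u' k' ⊔ t) ≤ u k' := inf_le_left
    rw [hkv] at this
    exact absurd this (not_le.mpr (hvoff k' hkA))

private lemma class_all [Nonempty (Fin d)] (hf : Continuous f)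
    (hsel : ∀ x, ∃ i, f x = x i) (A : Finset (Fin d)) {s : X} {u w : Fin d → X}
    (huA : ∀ j ∈ A, u j = s) (hwA : ∀ j ∈ A, w j = s)
    (huo : ∀ j ∉ A, u j < s) (hwo : ∀ j ∉ A, w j < s)
    (hfu : f u = s) : f w = s := by
  have hmono := mono_of_sel hf hsel
  have h1 : f (fun j => u j ⊓ w j) = s := by
    refine core_lemma hf hsel A huA (fun j hj => by rw [huA j hj, hwA j hj, inf_idem]) huo
      (fun j hj => lt_of_le_of_lt inf_le_left (huo j hj)) (fun j => inf_le_left) hfu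
  have h2 : s ≤ f w := h1 ▸ hmono (fun j => inf_le_right)
  have h3 : f w ≤ s := by
    calc f w ≤ f (fun _ => s) := hmono (fun j => by
      by_cases h : j ∈ A
      · exact (hwA j h).le
      · exact (hwo j h).le)
    _ = s := const_eval hsel s
  exact le_antisymm h3 h2

private lemma raise_lemma [Nonempty (Fin d)] (hf : Continuous f)
    (hsel : ∀ x, ∃ i, f x = x i) (A : Finset (Fin d)) {s s' : X} (hss : s ≤ s')
    {w : Fin d → X} (hwA : ∀ j ∈ A, w j = s) (hwo : ∀ j ∉ A, w j < s) (hfw : f w = s) :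
    f (fun j => if j ∈ A then s' else w j) = s' := by
  classical
  have hmono := mono_of_sel hf hsel
  have hge : s ≤ f (fun j => if j ∈ A then s' else w j) := by
    rw [← hfw]
    apply hmono
    intro j
    by_cases h : j ∈ A
    · simp only [if_pos h, hwA j h]; exact hss
    · simp only [if_neg h]; exact le_rfl
  obtain ⟨k, hk⟩ := hsel (fun j => if j ∈ A then s' else w j)
  by_cases h : k ∈ A
  · rw [hk, if_pos h]
  · rw [hk, if_neg h] at hge
    exact absurd hge (not_le.mpr (hwo k h))

private lemma transport_lemma [Nonempty (Fin d)] (hf : Continuous f)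
    (hsel : ∀ x, ∃ i, f x = x i) (A : Finset (Fin d)) {s s' : X}
    {u u' : Fin d → X} (huA : ∀ j ∈ A, u j = s) (huo : ∀ j ∉ A, u j < s)
    (hu'A : ∀ j ∈ A, u' j = s') (hu'o : ∀ j ∉ A, u' j < s')
    (hfu : f u = s) : f u' = s' := by
  classical
  rcases le_or_gt s' s with hss | hss
  · have hfw : f (fun j => if j ∈ A then s else u' j) = s := by
      refine class_all hf hsel A huA (fun j hj => if_pos hj) huo
        (fun j hj => by rw [if_neg hj]; exact lt_of_lt_of_le (hu'o j hj) hss) hfu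
    have hrepr : u' = fun j => (if j ∈ A then s else u' j) ⊓ s' := funext fun j => by
      by_cases h : j ∈ A
      · rw [if_pos h, hu'A j h, inf_eq_right.mpr hss]
      · rw [if_neg h, inf_eq_left.mpr (hu'o j h).le]
    rw [hrepr]
    exact cap_eval hf hsel (le_of_le_of_eq hss hfw.symm)
  · by_cases hA : ∀ j, j ∈ A
    · have : u' = fun _ => s' := funext fun j => hu'A j (hA j)
      rw [this]
      exact const_eval hsel s'
    · push_neg at hA
      obtain ⟨k₀, hk₀⟩ := hA
      have hr : u k₀ < s := huo k₀ hk₀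
      have hfw : f (fun j => if j ∈ A then s else u' j ⊓ u k₀) = s := by
        refine class_all hf hsel A huA (fun j hj => if_pos hj) huo
          (fun j hj => by rw [if_neg hj]; exact lt_of_le_of_lt inf_le_right hr) hfu
      have hq : f (fun j => if j ∈ A then s'
          else (fun j => if j ∈ A then s else u' j ⊓ u k₀) j) = s' := by
        refine raise_lemma hf hsel A hss.le (fun j hj => if_pos hj)
          (fun j hj => by rw [if_neg hj]; exact lt_of_le_of_lt inf_le_right hr) hfw
      refine class_all hf hsel A (fun j hj => if_pos hj) hu'A
        (fun j hj => by
          rw [if_neg hj, if_neg hj]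
          exact lt_of_le_of_lt inf_le_right (hr.trans hss)) hu'o hq

private lemma crux_lemma [Nonempty (Fin d)] (hf : Continuous f)
    (hsel : ∀ x, ∃ i, f x = x i) (x y : Fin d → X) :
    ∃ j, f x ≤ x j ∧ y j ≤ f y := by
  classical
  have hmono := mono_of_sel hf hsel
  set A : Finset (Fin d) := Finset.univ.filter (fun j => f x ≤ x j) with hAdef
  obtain ⟨i, hi⟩ := hsel x
  have hiA : i ∈ A := Finset.mem_filter.mpr ⟨Finset.mem_univ i, hi.le⟩
  have hA : A.Nonempty := ⟨i, hiA⟩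
  obtain ⟨j₀, hj₀A, hj₀⟩ := Finset.exists_mem_eq_inf' hA y
  set m := A.inf' hA y with hm
  suffices h : m ≤ f y by
    exact ⟨j₀, (Finset.mem_filter.mp hj₀A).2, le_trans (le_of_eq hj₀.symm) h⟩
  by_cases hr : ∃ r, r < m
  · obtain ⟨r, hrm⟩ := hr
    have hu : f (fun j => x j ⊓ f x) = f x := cap_eval hf hsel le_rfl
    have hu' : f (fun j => if j ∈ A then m else y j ⊓ r) = m := by
      refine transport_lemma hf hsel A
        (fun j hj => inf_eq_right.mpr (Finset.mem_filter.mp hj).2)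
        (fun j hj => ?_) (fun j hj => if_pos hj)
        (fun j hj => by rw [if_neg hj]; exact lt_of_le_of_lt inf_le_right hrm) hu
      · have hlt : x j < f x := not_le.mp (fun hc => hj (Finset.mem_filter.mpr ⟨Finset.mem_univ j, hc⟩))
        rw [inf_eq_left.mpr hlt.le]
        exact hlt
    have hle : (fun j => if j ∈ A then m else y j ⊓ r) ≤ y := fun j => by
      show (if j ∈ A then m else y j ⊓ r) ≤ y j
      by_cases h : j ∈ A
      · rw [if_pos h]; exact Finset.inf'_le y h
      · rw [if_neg h]; exact inf_le_left
    calc m = f (fun j => if j ∈ A then m else y j ⊓ r) := hu'.symm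
    _ ≤ f y := hmono hle
  · push_neg at hr
    obtain ⟨k, hk⟩ := hsel y
    exact hk ▸ hr (y k)


private lemma continuous_finset_sup'' {Z : Type*} [TopologicalSpace Z] {ι : Type*}
    (s : Finset ι) (hs : s.Nonempty) (g : ι → Z → X) (hg : ∀ i, Continuous (g i)) :
    Continuous fun z => s.sup' hs fun i => g i z := by
  induction hs using Finset.Nonempty.cons_induction with
  | singleton a => simpa using hg a
  | cons a s ha hs ih =>
      simp only [Finset.sup'_cons hs]
      exact (hg a).max ih

private lemma continuous_finset_inf'' {Z : Type*} [TopologicalSpace Z] {ι : Type*}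
    (s : Finset ι) (hs : s.Nonempty) (g : ι → Z → X) (hg : ∀ i, Continuous (g i)) :
    Continuous fun z => s.inf' hs fun i => g i z := by
  induction hs using Finset.Nonempty.cons_induction with
  | singleton a => simpa using hg a
  | cons a s ha hs ih =>
      simp only [Finset.inf'_cons hs]
      exact (hg a).min ih

end SelectorAux

/-- For a connected linear order `X`, a function `f : X^d → X` is a continuous
coordinate selector iff it is a lattice polynomial in the coordinates,
`f x = ⋁_{K ∈ 𝒦} ⋀_{j ∈ K} x j` for a nonempty family `𝒦` of nonempty subsets. -/
theorem continuous_selector_iff_lattice_poly (X : Type*) [LinearOrder X]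
    [TopologicalSpace X] [OrderTopology X] [ConnectedSpace X]
    (d : ℕ) (f : (Fin d → X) → X) :
    (Continuous f ∧ ∀ x : Fin d → X, ∃ i : Fin d, f x = x i) ↔
    (∃ (𝒦 : Finset (Finset (Fin d))) (h𝒦 : 𝒦.Nonempty) (hK : ∀ K ∈ 𝒦, K.Nonempty),
      ∀ x : Fin d → X, f x = 𝒦.attach.sup' (Finset.attach_nonempty_iff.mpr h𝒦)
        (fun K => K.1.inf' (hK K.1 K.2) (fun j => x j))) := by
  classical
  constructor
  · rintro ⟨hf, hsel⟩
    have hX : Nonempty X := inferInstance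
    obtain ⟨i₀, -⟩ := hsel (fun _ => Classical.arbitrary X)
    haveI : Nonempty (Fin d) := ⟨i₀⟩
    set 𝒦 : Finset (Finset (Fin d)) := Finset.univ.filter
      (fun K => K.Nonempty ∧ ∀ y : Fin d → X, ∃ j ∈ K, y j ≤ f y) with h𝒦def
    have hKuniv : (Finset.univ : Finset (Fin d)) ∈ 𝒦 := by
      refine Finset.mem_filter.mpr ⟨Finset.mem_univ _, Finset.univ_nonempty, fun y => ?_⟩
      obtain ⟨k, hk⟩ := hsel y
      exact ⟨k, Finset.mem_univ k, hk.ge⟩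
    have h𝒦 : 𝒦.Nonempty := ⟨_, hKuniv⟩
    have hK : ∀ K ∈ 𝒦, K.Nonempty := fun K hKm => (Finset.mem_filter.mp hKm).2.1
    refine ⟨𝒦, h𝒦, hK, fun x => ?_⟩
    apply le_antisymm
    · -- f x ≤ sup' : exhibit K(x)
      set Kx : Finset (Fin d) := Finset.univ.filter (fun j => f x ≤ x j) with hKxdef
      obtain ⟨i, hi⟩ := hsel x
      have hKxne : Kx.Nonempty := ⟨i, Finset.mem_filter.mpr ⟨Finset.mem_univ i, hi.le⟩⟩
      have hKx𝒦 : Kx ∈ 𝒦 := by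
        refine Finset.mem_filter.mpr ⟨Finset.mem_univ _, hKxne, fun y => ?_⟩
        obtain ⟨j, hj1, hj2⟩ := crux_lemma hf hsel x y
        exact ⟨j, Finset.mem_filter.mpr ⟨Finset.mem_univ j, hj1⟩, hj2⟩
      have h1 : f x ≤ Kx.inf' (hK Kx hKx𝒦) (fun j => x j) :=
        Finset.le_inf' _ _ fun j hj => (Finset.mem_filter.mp hj).2
      exact h1.trans (Finset.le_sup' (f := fun K : {K // K ∈ 𝒦} =>
        K.1.inf' (hK K.1 K.2) (fun j => x j)) (Finset.mem_attach _ ⟨Kx, hKx𝒦⟩))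
    · refine Finset.sup'_le _ _ fun K hKm => ?_
      obtain ⟨j, hj1, hj2⟩ := (Finset.mem_filter.mp K.2).2.2 x
      exact (Finset.inf'_le _ hj1).trans hj2
  · rintro ⟨𝒦, h𝒦, hK, hrepr⟩
    constructor
    · have : f = fun x => 𝒦.attach.sup' (Finset.attach_nonempty_iff.mpr h𝒦)
          (fun K => K.1.inf' (hK K.1 K.2) (fun j => x j)) := funext hrepr
      rw [this]
      exact continuous_finset_sup'' _ _ _ fun K =>
        continuous_finset_inf'' _ _ (fun j (x : Fin d → X) => x j) fun j => continuous_apply j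
    · intro x
      obtain ⟨K, hKm, hKeq⟩ := Finset.exists_mem_eq_sup'
        (Finset.attach_nonempty_iff.mpr h𝒦)
        (fun K : {K // K ∈ 𝒦} => K.1.inf' (hK K.1 K.2) (fun j => x j))
      obtain ⟨j, hjm, hjeq⟩ := Finset.exists_mem_eq_inf' (hK K.1 K.2) (fun j => x j)
      exact ⟨j, by rw [hrepr x, hKeq, hjeq]⟩
end

section
/- There exists a disconnected linear order X and a continuous coordinate selector f : X^2 → X that is not representable as a lattice polynomial in the coordinates. -/
/-- There is a disconnected linear order `X` and a continuous coordinate selector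
`f : X² → X` that is not representable as a lattice polynomial in the coordinates. -/
theorem exists_disconnected_selector_not_poly :
    ∃ (X : Type) (_ : LinearOrder X) (_ : TopologicalSpace X) (_ : OrderTopology X)
      (f : (Fin 2 → X) → X),
      ¬ ConnectedSpace X ∧ Continuous f ∧ (∀ x : Fin 2 → X, ∃ i : Fin 2, f x = x i) ∧
      ¬ (∃ (𝒦 : Finset (Finset (Fin 2))) (h𝒦 : 𝒦.Nonempty) (hK : ∀ K ∈ 𝒦, K.Nonempty),
        ∀ x : Fin 2 → X, f x = 𝒦.attach.sup' (Finset.attach_nonempty_iff.mpr h𝒦)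
          (fun K => K.1.inf' (hK K.1 K.2) (fun j => x j))) := by
  refine ⟨ℤ, inferInstance, inferInstance, inferInstance,
    fun x => if x 0 < 0 then x 0 else x 1, ?_, ?_, ?_, ?_⟩
  · intro h
    have hsub := (isPreconnected_univ (α := ℤ)).subsingleton
    have : (0 : ℤ) = 1 := hsub (Set.mem_univ 0) (Set.mem_univ 1)
    norm_num at this
  · exact continuous_of_discreteTopology
  · intro x
    by_cases h : x 0 < 0
    · exact ⟨0, if_pos h⟩
    · exact ⟨1, if_neg h⟩
  · rintro ⟨𝒦, h𝒦, hK, hP⟩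
    set a : Fin 2 → ℤ := ![-1, -2] with ha
    set b : Fin 2 → ℤ := ![0, -2] with hb
    have hab : ∀ i, a i ≤ b i := by
      intro i
      fin_cases i <;> simp [ha, hb]
    have hmono : 𝒦.attach.sup' (Finset.attach_nonempty_iff.mpr h𝒦)
          (fun K => K.1.inf' (hK K.1 K.2) (fun j => a j)) ≤
        𝒦.attach.sup' (Finset.attach_nonempty_iff.mpr h𝒦)
          (fun K => K.1.inf' (hK K.1 K.2) (fun j => b j)) := by
      apply Finset.sup'_mono_fun
      intro K _
      exact Finset.le_inf' _ _ (fun j hj => le_trans (Finset.inf'_le _ hj) (hab j))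
    have hfa : (if a 0 < 0 then a 0 else a 1) = -1 := by
      simp [ha]
    have hfb : (if b 0 < 0 then b 0 else b 1) = -2 := by
      simp [hb]
    have h1 := hP a
    have h2 := hP b
    simp only [hfa] at h1
    simp only [hfb] at h2
    rw [← h1, ← h2] at hmono
    norm_num at hmono
end
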